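/- arXiv:2406.12205 — 4 statements merged into one kernel-verified Lean document; each statement's English description precedes it below -/
import Mathlib

section
/- Worst-case upper bound for RL-LOW (Proposition 3): There exists a constant C > 0 depending only on L such that for every consistent offline RLHF instance v and every sample size n ≥ 1 with n·N_{k,i,j} ∈ ℕ for all (k,i,j), and for every measurable choice of î_k ∈ Î_k, the expected simple regret of RL-LOW satisfies E[R_n] ≤ C·n^{−1/2}·Σ_{k∈𝒮, i≠i*_k} ρ_k·(√(γ_{k,i}) + γ̃_{k,i}), where γ̃_{k,i} = Σ_{(k',i',j'):N_{k',i',j'}>0} |w^{(k,i,i*_k)}_{k',i',j'}|/√(N_{k',i',j'}). -/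
open MeasureTheory ProbabilityTheory Real

namespace RLHF

/-- The logistic sigmoid function. -/
noncomputable def sigmoid (x : ℝ) : ℝ := Real.exp x / (1 + Real.exp x)

/-- Clipping to the interval `[1/(1+e^{2L}), e^{2L}/(1+e^{2L})]`. -/
noncomputable def clip (L x : ℝ) : ℝ :=
  max (1 / (1 + Real.exp (2 * L))) (min (Real.exp (2 * L) / (1 + Real.exp (2 * L))) x)

/-- The logit (log-odds) function. -/
noncomputable def logit (x : ℝ) : ℝ := Real.log (x / (1 - x))

/-- An offline RLHF instance: state distribution, feature map, parameter vector and
sampling proportions. -/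
structure Inst (S A d : ℕ) where
  ρ : Fin S → ℝ
  φ : Fin S → Fin A → EuclideanSpace ℝ (Fin d)
  θ : EuclideanSpace ℝ (Fin d)
  N : Fin S → Fin A → Fin A → ℝ
  ρ_pos : ∀ k, 0 < ρ k
  ρ_sum : ∑ k, ρ k = 1
  N_nonneg : ∀ k i j, 0 ≤ N k i j
  N_sum : ∑ k, ∑ i, ∑ j, N k i j = 1
  φ_ne : ∀ k i j, i ≠ j → φ k i ≠ φ k j

namespace Inst

variable {S A d : ℕ}

/-- The reward of action `i` in state `k`. -/
noncomputable def r (v : Inst S A d) (k : Fin S) (i : Fin A) : ℝ :=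
  @inner ℝ _ _ (v.φ k i) v.θ

/-- The span of the sampled feature differences. -/
def W (v : Inst S A d) : Submodule ℝ (EuclideanSpace ℝ (Fin d)) :=
  Submodule.span ℝ {x | ∃ k i j, 0 < v.N k i j ∧ x = v.φ k i - v.φ k j}

/-- Consistency of an instance. -/
def Consistent (v : Inst S A d) : Prop :=
  ∀ k i j, v.φ k i - v.φ k j ∈ v.W

/-- `istar` assigns to each state its unique best action. -/
def BestAction (v : Inst S A d) (istar : Fin S → Fin A) : Prop :=
  ∀ k j, j ≠ istar k → v.r k j < v.r k (istar k)

/-- The suboptimality gap. -/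
noncomputable def gap (v : Inst S A d) (istar : Fin S → Fin A) (k : Fin S) (i : Fin A) : ℝ :=
  v.r k (istar k) - v.r k i

/-- The objective value of a candidate weight vector. -/
noncomputable def cost (v : Inst S A d) (u : Fin S → Fin A → Fin A → ℝ) : ℝ :=
  ∑ k', ∑ i', ∑ j', if 0 < v.N k' i' j' then (u k' i' j') ^ 2 / v.N k' i' j' else 0

/-- Feasibility of a weight vector for the pair `(i,j)` in state `k`: it vanishes where
`N` vanishes and expresses `φ(k,i) − φ(k,j)` as a linear combination of sampled feature
differences. -/
def Feasible (v : Inst S A d) (k : Fin S) (i j : Fin A)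
    (u : Fin S → Fin A → Fin A → ℝ) : Prop :=
  (∀ k' i' j', v.N k' i' j' = 0 → u k' i' j' = 0) ∧
  v.φ k i - v.φ k j = ∑ k', ∑ i', ∑ j', u k' i' j' • (v.φ k' i' - v.φ k' j')

/-- `w` is a locally optimal weight vector for `(k,i,j)`. -/
def IsLOW (v : Inst S A d) (k : Fin S) (i j : Fin A)
    (w : Fin S → Fin A → Fin A → ℝ) : Prop :=
  v.Feasible k i j w ∧ ∀ u, v.Feasible k i j u → v.cost w ≤ v.cost u

/-- `γ̃_{k,i}`-type quantity: weighted sum of absolute weights over `1/√N`. -/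
noncomputable def gammaTilde (v : Inst S A d) (u : Fin S → Fin A → Fin A → ℝ) : ℝ :=
  ∑ k', ∑ i', ∑ j',
    if 0 < v.N k' i' j' then |u k' i' j'| / Real.sqrt (v.N k' i' j') else 0

/-- `γ^DP`-type quantity. -/
noncomputable def gammaDP (v : Inst S A d) (u : Fin S → Fin A → Fin A → ℝ) : ℝ :=
  ∑ k', ∑ i', ∑ j',
    if 0 < v.N k' i' j' then (u k' i' j' / v.N k' i' j') ^ 2 else 0

/-- `γ̃^DP`-type quantity. -/
noncomputable def gammaTildeDP (v : Inst S A d) (u : Fin S → Fin A → Fin A → ℝ) : ℝ :=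
  ∑ k', ∑ i', ∑ j',
    if 0 < v.N k' i' j' then |u k' i' j'| / v.N k' i' j' else 0

/-- The hardness parameter `H(v)`, where `w k i j` denotes the locally optimal weights
for the triple `(k,i,j)`. -/
noncomputable def H (v : Inst S A d) (istar : Fin S → Fin A)
    (w : Fin S → Fin A → Fin A → Fin S → Fin A → Fin A → ℝ) : ℝ :=
  sSup {x | ∃ k i, i ≠ istar k ∧
    x = v.cost (w k i (istar k)) / (v.gap istar k i) ^ 2}

/-- The DP hardness parameter `H_DP^{(ε,δ)}(v)`. -/
noncomputable def HDP (v : Inst S A d) (istar : Fin S → Fin A)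
    (w : Fin S → Fin A → Fin A → Fin S → Fin A → Fin A → ℝ) (ε δ : ℝ) : ℝ :=
  sSup {x | ∃ k i, i ≠ istar k ∧
    x = Real.sqrt (Real.log (1.25 / δ) * v.gammaDP (w k i (istar k))) /
        (Real.sqrt ε * v.gap istar k i)}

/-- The empirical success proportion `B_{k,i,j}` computed from counts `y`. -/
noncomputable def B (v : Inst S A d) (n : ℕ) (y : Fin S → Fin A → Fin A → ℕ)
    (k : Fin S) (i j : Fin A) : ℝ :=
  if 0 < v.N k i j then (y k i j : ℝ) / (n * v.N k i j) else 0

/-- The RL-LOW relative reward estimate `r̂_{k,i,j}` computed from counts `y`. -/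
noncomputable def rhat (v : Inst S A d) (L : ℝ) (n : ℕ)
    (w : Fin S → Fin A → Fin A → Fin S → Fin A → Fin A → ℝ)
    (y : Fin S → Fin A → Fin A → ℕ) (k : Fin S) (i j : Fin A) : ℝ :=
  if i = j then 0 else
    ∑ k', ∑ i', ∑ j', w k i j k' i' j' * logit (clip L (v.B n y k' i' j'))

/-- The DP-RL-LOW private relative reward estimate `r̃_{k,i,j}` computed from counts `y`
and Gaussian noise realizations `z`. -/
noncomputable def rtilde (v : Inst S A d) (L : ℝ) (n : ℕ)
    (w : Fin S → Fin A → Fin A → Fin S → Fin A → Fin A → ℝ)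
    (y : Fin S → Fin A → Fin A → ℕ) (z : Fin S → Fin A → Fin A → ℝ)
    (k : Fin S) (i j : Fin A) : ℝ :=
  if i = j then 0 else
    ∑ k', ∑ i', ∑ j', w k i j k' i' j' *
      logit (clip L
        (if 0 < v.N k' i' j' then
          (y k' i' j' : ℝ) / (n * v.N k' i' j') + z k' i' j' else 0))

/-- Simple regret of the action assignment `ihat` (using the best actions `istar`). -/
noncomputable def regret (v : Inst S A d) (istar : Fin S → Fin A)
    (ihat : Fin S → Fin A) : ℝ :=
  ∑ k, v.ρ k * (v.r k (istar k) - v.r k (ihat k))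

/-- Simple regret of the action assignment `ihat` (via suprema of rewards; this does not
require the best action to be unique). -/
noncomputable def regretSup (v : Inst S A d) (ihat : Fin S → Fin A) : ℝ :=
  ∑ k, v.ρ k * ((⨆ j, v.r k j) - v.r k (ihat k))

end Inst

/-- `Y` has the binomial law with `m` trials and success probability `p` under `P`. -/
def HasBinomialLaw {Ω : Type*} [MeasurableSpace Ω] (P : Measure Ω)
    (Y : Ω → ℕ) (m : ℕ) (p : ℝ) : Prop :=
  ∀ t : ℕ, P {ω | Y ω = t} =
    ENNReal.ofReal ((m.choose t : ℝ) * p ^ t * (1 - p) ^ (m - t))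

/-- The data model of offline RLHF with pairwise comparisons: for each triple `(k,i,j)`
with `N_{k,i,j} > 0`, the count `Y k i j` is binomial with `n·N_{k,i,j}` trials and
success probability `σ(r_{k,i} − r_{k,j})`, and these counts are independent. -/
def IsBTLSample {S A d : ℕ} (v : Inst S A d) (n : ℕ) {Ω : Type*} [MeasurableSpace Ω]
    (P : Measure Ω) (Y : Fin S → Fin A → Fin A → Ω → ℕ) : Prop :=
  (∀ k i j, Measurable (Y k i j)) ∧
  (∀ k i j, 0 < v.N k i j →
    HasBinomialLaw P (Y k i j) ⌈(n : ℝ) * v.N k i j⌉₊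
      (sigmoid (v.r k i - v.r k j))) ∧
  iIndepFun
    (fun (t : {t : Fin S × Fin A × Fin A // 0 < v.N t.1 t.2.1 t.2.2}) =>
      fun ω => (Y t.1.1 t.1.2.1 t.1.2.2 ω : ℝ)) P

/-- The data model of DP-RL-LOW: on top of the BTL counts, for each triple with
`N_{k,i,j} > 0` there is Gaussian noise `ξ k i j` of mean `0` and variance
`2·log(1.25/δ)/(ε·n·N_{k,i,j})²`, and all counts and noises are jointly independent. -/
def IsDPSample {S A d : ℕ} (v : Inst S A d) (n : ℕ) (ε δ : ℝ) {Ω : Type*}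
    [MeasurableSpace Ω] (P : Measure Ω)
    (Y : Fin S → Fin A → Fin A → Ω → ℕ) (ξ : Fin S → Fin A → Fin A → Ω → ℝ) : Prop :=
  (∀ k i j, Measurable (Y k i j)) ∧
  (∀ k i j, Measurable (ξ k i j)) ∧
  (∀ k i j, 0 < v.N k i j →
    HasBinomialLaw P (Y k i j) ⌈(n : ℝ) * v.N k i j⌉₊
      (sigmoid (v.r k i - v.r k j))) ∧
  (∀ k i j, 0 < v.N k i j →
    P.map (ξ k i j) =
      gaussianReal 0
        (Real.toNNReal (2 * Real.log (1.25 / δ) / (ε * n * v.N k i j) ^ 2))) ∧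
  iIndepFun
    (fun (t : {t : Fin S × Fin A × Fin A // 0 < v.N t.1 t.2.1 t.2.2} ⊕
              {t : Fin S × Fin A × Fin A // 0 < v.N t.1 t.2.1 t.2.2}) =>
      Sum.elim
        (fun t => fun ω => (Y t.1.1 t.1.2.1 t.1.2.2 ω : ℝ))
        (fun t => ξ t.1.1 t.1.2.1 t.1.2.2) t) P

end RLHF

open RLHF

section AuxLemmas

open Finset MeasureTheory

/-! ### Binomial sum identities -/

lemma binom_S0 (m : ℕ) (p q : ℝ) :
    ∑ t ∈ Finset.range (m+1), (m.choose t : ℝ) * p^t * q^(m-t) = (p+q)^m := by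
  rw [add_pow]
  exact Finset.sum_congr rfl fun t _ => by ring

lemma binom_S1 (m : ℕ) (p q : ℝ) :
    ∑ t ∈ Finset.range (m+1), (t : ℝ) * ((m.choose t : ℝ) * p^t * q^(m-t))
      = m * p * (p+q)^(m-1) := by
  cases m with
  | zero => simp
  | succ m =>
    rw [Finset.sum_range_succ']
    simp only [Nat.cast_zero, zero_mul, add_zero, Nat.add_sub_cancel]
    have key : ∀ s, ((s+1 : ℕ) : ℝ) * (((m+1).choose (s+1) : ℝ) * p^(s+1) * q^(m+1-(s+1)))
        = (((m:ℝ)+1) * p) * ((m.choose s : ℝ) * p^s * q^(m-s)) := by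
      intro s
      have h' : ((m+1 : ℕ) : ℝ) * (m.choose s : ℝ)
          = ((m+1).choose (s+1) : ℝ) * ((s+1 : ℕ) : ℝ) := by
        exact_mod_cast congrArg (Nat.cast : ℕ → ℝ) (Nat.add_one_mul_choose_eq m s)
      have hq : m + 1 - (s+1) = m - s := by omega
      rw [hq]
      push_cast at h' ⊢
      linear_combination (-(p^(s+1) * q^(m-s))) * h'
    calc ∑ s ∈ Finset.range (m+1),
          ((s+1 : ℕ) : ℝ) * (((m+1).choose (s+1) : ℝ) * p^(s+1) * q^(m+1-(s+1)))
        = ∑ s ∈ Finset.range (m+1),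
            (((m:ℝ)+1) * p) * ((m.choose s : ℝ) * p^s * q^(m-s)) :=
          Finset.sum_congr rfl fun s _ => key s
      _ = (((m:ℝ)+1) * p) * ∑ s ∈ Finset.range (m+1), (m.choose s : ℝ) * p^s * q^(m-s) :=
          (Finset.mul_sum _ _ _).symm
      _ = ((m+1 : ℕ) : ℝ) * p * (p+q)^m := by rw [binom_S0]; push_cast; ring

lemma binom_S2 (m : ℕ) (p q : ℝ) :
    ∑ t ∈ Finset.range (m+1), ((t : ℝ) * ((t:ℝ)-1)) * ((m.choose t : ℝ) * p^t * q^(m-t))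
      = m * ((m:ℝ)-1) * p^2 * (p+q)^(m-2) := by
  cases m with
  | zero => simp
  | succ m =>
    rw [Finset.sum_range_succ']
    have key : ∀ s : ℕ, ((s+1:ℕ):ℝ) * (((s+1:ℕ):ℝ)-1) * (((m+1).choose (s+1) : ℝ) * p^(s+1) * q^(m+1-(s+1)))
        = ((m:ℝ)+1) * p * ((s:ℝ) * ((m.choose s : ℝ) * p^s * q^(m-s))) := by
      intro s
      have h' : ((m+1 : ℕ) : ℝ) * (m.choose s : ℝ)
          = ((m+1).choose (s+1) : ℝ) * ((s+1 : ℕ) : ℝ) := by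
        exact_mod_cast congrArg (Nat.cast : ℕ → ℝ) (Nat.add_one_mul_choose_eq m s)
      have hq : m + 1 - (s+1) = m - s := by omega
      rw [hq]
      push_cast at h' ⊢
      linear_combination (-(s * p^(s+1) * q^(m-s))) * h'
    rw [Finset.sum_congr rfl fun s _ => key s, ← Finset.mul_sum, binom_S1,
      show m+1-2 = m-1 by omega]
    push_cast
    ring

lemma binom_var (m : ℕ) (p : ℝ) :
    ∑ t ∈ Finset.range (m+1), ((t:ℝ) - m*p)^2 * ((m.choose t : ℝ) * p^t * (1-p)^(m-t))
      = m * p * (1-p) := by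
  have hpq : p + (1-p) = 1 := by ring
  have h0 := binom_S0 m p (1-p)
  have h1 := binom_S1 m p (1-p)
  have h2 := binom_S2 m p (1-p)
  rw [hpq, one_pow] at h0 h1 h2
  calc ∑ t ∈ Finset.range (m+1), ((t:ℝ) - m*p)^2 * ((m.choose t : ℝ) * p^t * (1-p)^(m-t))
      = ∑ t ∈ Finset.range (m+1), (((t:ℝ) * ((t:ℝ)-1)) * ((m.choose t : ℝ) * p^t * (1-p)^(m-t))
          + ((1 - 2*(m:ℝ)*p) * ((t:ℝ) * ((m.choose t : ℝ) * p^t * (1-p)^(m-t)))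
          + ((m:ℝ)*p)^2 * ((m.choose t : ℝ) * p^t * (1-p)^(m-t)))) :=
        Finset.sum_congr rfl fun t _ => by ring
    _ = (m * ((m:ℝ)-1) * p^2) + ((1 - 2*(m:ℝ)*p) * ((m:ℝ)*p) + ((m:ℝ)*p)^2 * 1) := by
        rw [Finset.sum_add_distrib, Finset.sum_add_distrib, ← Finset.mul_sum, ← Finset.mul_sum,
          h0, h1, h2]
        ring
    _ = m * p * (1-p) := by ring

/-! ### Consequences of the binomial law -/

variable {Ω : Type*} [MeasurableSpace Ω] {P : MeasureTheory.Measure Ω}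
  [MeasureTheory.IsProbabilityMeasure P] {Y : Ω → ℕ} {m : ℕ} {p : ℝ}

lemma binom_pmf_nonneg (hp : 0 ≤ p) (hp1 : p ≤ 1) (m t : ℕ) :
    0 ≤ (m.choose t : ℝ) * p ^ t * (1 - p) ^ (m - t) :=
  mul_nonneg (mul_nonneg (Nat.cast_nonneg _) (pow_nonneg hp _))
    (pow_nonneg (by linarith) _)

omit [MeasureTheory.IsProbabilityMeasure P] in
lemma binom_ae_le (hB : HasBinomialLaw P Y m p) : ∀ᵐ ω ∂P, Y ω ≤ m := by
  rw [MeasureTheory.ae_iff]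
  have hsub : {ω | ¬ Y ω ≤ m} ⊆ ⋃ t : ℕ, {ω | Y ω = m + 1 + t} := by
    intro ω hω
    simp only [Set.mem_setOf_eq, not_le] at hω
    exact Set.mem_iUnion.2 ⟨Y ω - (m+1), by simp only [Set.mem_setOf_eq]; omega⟩
  refine measure_mono_null hsub (measure_iUnion_null fun t => ?_)
  rw [hB (m+1+t), Nat.choose_eq_zero_of_lt (by omega)]
  simp

lemma binom_integral (hY : Measurable Y) (hp : 0 ≤ p) (hp1 : p ≤ 1)
    (hB : HasBinomialLaw P Y m p) (g : ℕ → ℝ) :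
    MeasureTheory.Integrable (fun ω => g (Y ω)) P ∧
    ∫ ω, g (Y ω) ∂P
      = ∑ t ∈ Finset.range (m+1), g t * ((m.choose t : ℝ) * p ^ t * (1 - p) ^ (m - t)) := by
  set F : Ω → ℝ := fun ω => ∑ t ∈ Finset.range (m+1),
    Set.indicator {ω' | Y ω' = t} (fun _ => g t) ω with hF
  have hmeas : ∀ t : ℕ, MeasurableSet {ω' | Y ω' = t} := fun t =>
    hY (measurableSet_singleton t)
  have hFint : MeasureTheory.Integrable F P :=
    MeasureTheory.integrable_finset_sum _ fun t _ =>
      (MeasureTheory.integrable_const (g t)).indicator (hmeas t)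
  have hae : (fun ω => g (Y ω)) =ᵐ[P] F := by
    filter_upwards [binom_ae_le hB] with ω hω
    have hFval : F ω = ∑ t ∈ Finset.range (m+1), if Y ω = t then g t else 0 := by
      refine Finset.sum_congr rfl fun t _ => ?_
      by_cases h : Y ω = t <;> simp [Set.indicator, h]
    rw [hFval, Finset.sum_ite_eq (Finset.range (m+1)) (Y ω) g,
      if_pos (Finset.mem_range.2 (by omega))]
  have hint : MeasureTheory.Integrable (fun ω => g (Y ω)) P := hFint.congr hae.symm
  refine ⟨hint, ?_⟩
  rw [MeasureTheory.integral_congr_ae hae, MeasureTheory.integral_finset_sum _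
    (fun t _ => (MeasureTheory.integrable_const (g t)).indicator (hmeas t))]
  refine Finset.sum_congr rfl fun t _ => ?_
  rw [MeasureTheory.integral_indicator_const _ (hmeas t), measureReal_def, hB t, smul_eq_mul,
    ENNReal.toReal_ofReal (binom_pmf_nonneg hp hp1 m t)]
  ring

lemma binom_absdev (hY : Measurable Y) (hp : 0 ≤ p) (hp1 : p ≤ 1)
    (hB : HasBinomialLaw P Y m p) (hm : 1 ≤ m) :
    MeasureTheory.Integrable (fun ω => |((Y ω : ℝ))/m - p|) P ∧
    ∫ ω, |((Y ω : ℝ))/m - p| ∂P ≤ 1/(2 * Real.sqrt m) := by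
  obtain ⟨hint, heq⟩ := binom_integral hY hp hp1 hB (fun t => |(t:ℝ)/m - p|)
  refine ⟨hint, ?_⟩
  set pm : ℕ → ℝ := fun t => (m.choose t : ℝ) * p ^ t * (1 - p) ^ (m - t) with hpm
  rw [heq]
  have hpm0 : ∀ t, 0 ≤ pm t := fun t => binom_pmf_nonneg hp hp1 m t
  have hm0 : (0:ℝ) < m := by exact_mod_cast hm
  have hsum1 : ∑ t ∈ Finset.range (m+1), pm t = 1 := by
    have h := binom_S0 m p (1-p)
    rwa [show p + (1-p) = 1 by ring, one_pow] at h
  have hvar : ∑ t ∈ Finset.range (m+1), ((t:ℝ) - m*p)^2 * pm t = m * p * (1-p) :=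
    binom_var m p
  have hx2 : ∑ t ∈ Finset.range (m+1), ((t:ℝ)/m - p)^2 * pm t = p * (1-p) / m := by
    have hterm : ∀ t ∈ Finset.range (m+1), ((t:ℝ)/m - p)^2 * pm t
        = (((t:ℝ) - m*p)^2 * pm t) / m^2 := by
      intro t _
      field_simp
    rw [Finset.sum_congr rfl hterm, ← Finset.sum_div, hvar]
    field_simp
  have hCS := Finset.sum_mul_sq_le_sq_mul_sq (Finset.range (m+1))
    (fun t => |(t:ℝ)/m - p| * Real.sqrt (pm t)) (fun t => Real.sqrt (pm t))
  have hl : ∀ t ∈ Finset.range (m+1), (|(t:ℝ)/m - p| * Real.sqrt (pm t)) * Real.sqrt (pm t)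
      = |(t:ℝ)/m - p| * pm t := by
    intro t _
    rw [mul_assoc, Real.mul_self_sqrt (hpm0 t)]
  have hsq : ∀ t ∈ Finset.range (m+1), (|(t:ℝ)/m - p| * Real.sqrt (pm t))^2
      = ((t:ℝ)/m - p)^2 * pm t := by
    intro t _
    rw [mul_pow, sq_abs, Real.sq_sqrt (hpm0 t)]
  have hsq2 : ∀ t ∈ Finset.range (m+1), (Real.sqrt (pm t))^2 = pm t := fun t _ =>
    Real.sq_sqrt (hpm0 t)
  rw [Finset.sum_congr rfl hl, Finset.sum_congr rfl hsq,
    Finset.sum_congr rfl hsq2, hx2, hsum1, mul_one] at hCS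
  have hb : (∑ t ∈ Finset.range (m+1), |(t:ℝ)/m - p| * pm t)^2 ≤ 1/(4*m) := by
    calc _ ≤ p * (1-p) / m := hCS
      _ ≤ 1/(4*m) := by
          rw [div_le_div_iff₀ hm0 (by linarith)]
          nlinarith [sq_nonneg (p - 1/2)]
  have hnn : 0 ≤ ∑ t ∈ Finset.range (m+1), |(t:ℝ)/m - p| * pm t :=
    Finset.sum_nonneg fun t _ => mul_nonneg (abs_nonneg _) (hpm0 t)
  calc ∑ t ∈ Finset.range (m+1), |(t:ℝ)/m - p| * pm t
      = Real.sqrt ((∑ t ∈ Finset.range (m+1), |(t:ℝ)/m - p| * pm t)^2) :=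
        (Real.sqrt_sq hnn).symm
    _ ≤ Real.sqrt (1/(4*m)) := Real.sqrt_le_sqrt hb
    _ = 1/(2 * Real.sqrt m) := by
        rw [show (4:ℝ)*m = (2*Real.sqrt m)^2 by
            rw [mul_pow, Real.sq_sqrt hm0.le]; norm_num,
          one_div, one_div, Real.sqrt_inv, Real.sqrt_sq (by positivity)]

/-! ### Properties of sigmoid, clip and logit -/

lemma one_add_exp_pos (x : ℝ) : 0 < 1 + Real.exp x := by positivity

lemma sigmoid_pos (x : ℝ) : 0 < RLHF.sigmoid x :=
  div_pos (Real.exp_pos x) (one_add_exp_pos x)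

lemma sigmoid_lt_one (x : ℝ) : RLHF.sigmoid x < 1 := by
  rw [RLHF.sigmoid, div_lt_one (one_add_exp_pos x)]
  linarith

lemma one_sub_sigmoid (x : ℝ) : 1 - RLHF.sigmoid x = 1 / (1 + Real.exp x) := by
  rw [RLHF.sigmoid]
  field_simp
  ring

lemma logit_sigmoid (x : ℝ) : logit (RLHF.sigmoid x) = x := by
  have h := one_add_exp_pos x
  rw [logit, one_sub_sigmoid, RLHF.sigmoid,
    show Real.exp x/(1+Real.exp x)/(1/(1+Real.exp x)) = Real.exp x by field_simp]
  exact Real.log_exp x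

lemma sigmoid_mono {x y : ℝ} (h : x ≤ y) : RLHF.sigmoid x ≤ RLHF.sigmoid y := by
  rw [RLHF.sigmoid, RLHF.sigmoid, div_le_div_iff₀ (one_add_exp_pos x) (one_add_exp_pos y)]
  have := Real.exp_le_exp.2 h
  nlinarith [Real.exp_pos x, Real.exp_pos y]

lemma sigmoid_neg_eq (L : ℝ) : RLHF.sigmoid (-(2*L)) = 1 / (1 + Real.exp (2*L)) := by
  rw [RLHF.sigmoid, Real.exp_neg]
  have h := Real.exp_pos (2*L)
  field_simp
  ring

lemma sigmoid_mem {L x : ℝ} (hx : |x| ≤ 2*L) :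
    1 / (1 + Real.exp (2*L)) ≤ RLHF.sigmoid x ∧
    RLHF.sigmoid x ≤ Real.exp (2*L) / (1 + Real.exp (2*L)) := by
  obtain ⟨h1, h2⟩ := abs_le.1 hx
  exact ⟨sigmoid_neg_eq L ▸ sigmoid_mono (by linarith), sigmoid_mono h2⟩

lemma lo_le_hi {L : ℝ} (hL : 0 ≤ L) :
    1 / (1 + Real.exp (2*L)) ≤ Real.exp (2*L) / (1 + Real.exp (2*L)) := by
  have h1 : (1:ℝ) ≤ Real.exp (2*L) := Real.one_le_exp (by linarith)
  gcongr

lemma clip_mem {L : ℝ} (hL : 0 ≤ L) (x : ℝ) :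
    1 / (1 + Real.exp (2*L)) ≤ clip L x ∧
    clip L x ≤ Real.exp (2*L) / (1 + Real.exp (2*L)) := by
  constructor
  · exact le_max_left _ _
  · exact max_le (lo_le_hi hL) (min_le_left _ _)

lemma clip_dist {L p : ℝ} (hlo : 1 / (1 + Real.exp (2*L)) ≤ p)
    (hhi : p ≤ Real.exp (2*L) / (1 + Real.exp (2*L))) (x : ℝ) :
    |clip L x - p| ≤ |x - p| := by
  have hp : clip L p = p := by
    rw [clip, min_eq_right hhi, max_eq_right hlo]
  calc |clip L x - p| = |clip L x - clip L p| := by rw [hp]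
    _ ≤ |min (Real.exp (2*L) / (1 + Real.exp (2*L))) x
          - min (Real.exp (2*L) / (1 + Real.exp (2*L))) p| := by
        rw [clip, clip, max_comm, max_comm (1 / (1 + Real.exp (2*L)))]
        exact abs_max_sub_max_le_abs _ _ _
    _ ≤ |x - p| := by
        have h := abs_min_sub_min_le_max (Real.exp (2*L) / (1 + Real.exp (2*L))) x
          (Real.exp (2*L) / (1 + Real.exp (2*L))) p
        simpa using h

lemma log_lip {c a b : ℝ} (hc : 0 < c) (ha : c ≤ a) (hb : c ≤ b) :
    |Real.log a - Real.log b| ≤ |a - b| / c := by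
  wlog h : b ≤ a generalizing a b
  · rw [abs_sub_comm, abs_sub_comm a b]
    exact this hb ha (by linarith)
  have ha0 : 0 < a := lt_of_lt_of_le hc ha
  have hb0 : 0 < b := lt_of_lt_of_le hc hb
  rw [abs_of_nonneg (by linarith : (0:ℝ) ≤ a - b),
    abs_of_nonneg (sub_nonneg.2 ((Real.log_le_log_iff hb0 ha0).2 h))]
  have hlog : Real.log a - Real.log b = Real.log (a / b) := by
    rw [Real.log_div (ne_of_gt ha0) (ne_of_gt hb0)]
  rw [hlog]
  have h1 : Real.log (a/b) ≤ a/b - 1 := Real.log_le_sub_one_of_pos (by positivity)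
  have h2 : a/b - 1 = (a-b)/b := by field_simp
  have h3 : (a-b)/b ≤ (a-b)/c := by
    apply div_le_div_of_nonneg_left (by linarith) hc hb
  linarith

lemma logit_lip {L a b : ℝ} (hL : 0 ≤ L)
    (ha1 : 1 / (1 + Real.exp (2*L)) ≤ a) (ha2 : a ≤ Real.exp (2*L) / (1 + Real.exp (2*L)))
    (hb1 : 1 / (1 + Real.exp (2*L)) ≤ b) (hb2 : b ≤ Real.exp (2*L) / (1 + Real.exp (2*L))) :
    |logit a - logit b| ≤ 2 * (1 + Real.exp (2*L)) * |a - b| := by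
  set lo := 1 / (1 + Real.exp (2*L)) with hlo
  have hlo0 : 0 < lo := by positivity
  have hsum : Real.exp (2*L) / (1 + Real.exp (2*L)) = 1 - lo := by
    rw [hlo]; field_simp; ring
  have ha0 : 0 < a := lt_of_lt_of_le hlo0 ha1
  have hb0 : 0 < b := lt_of_lt_of_le hlo0 hb1
  have ha1' : lo ≤ 1 - a := by rw [hsum] at ha2; linarith
  have hb1' : lo ≤ 1 - b := by rw [hsum] at hb2; linarith
  have ha2' : a < 1 := by have := lt_of_lt_of_le hlo0 ha1'; linarith
  have hb2' : b < 1 := by have := lt_of_lt_of_le hlo0 hb1'; linarith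
  have hla : logit a = Real.log a - Real.log (1 - a) := by
    rw [logit, Real.log_div (ne_of_gt ha0) (by linarith)]
  have hlb : logit b = Real.log b - Real.log (1 - b) := by
    rw [logit, Real.log_div (ne_of_gt hb0) (by linarith)]
  have k1 : |Real.log a - Real.log b| ≤ |a - b| / lo := log_lip hlo0 ha1 hb1
  have k2 : |Real.log (1-a) - Real.log (1-b)| ≤ |a - b| / lo := by
    have h := log_lip hlo0 ha1' hb1'
    rwa [show (1-a) - (1-b) = -(a-b) by ring, abs_neg] at h
  have hinv : 1 / lo = 1 + Real.exp (2*L) := by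
    rw [hlo]; field_simp
  calc |logit a - logit b|
      = |(Real.log a - Real.log b) - (Real.log (1-a) - Real.log (1-b))| := by
        rw [hla, hlb]; ring_nf
    _ ≤ |Real.log a - Real.log b| + |Real.log (1-a) - Real.log (1-b)| :=
        abs_sub _ _
    _ ≤ |a - b| / lo + |a - b| / lo := add_le_add k1 k2
    _ = 2 * (1 + Real.exp (2*L)) * |a - b| := by
        rw [← add_div, ← hinv]
        field_simp
        ring

lemma logit_clip_dist {L r : ℝ} (hL : 0 ≤ L) (hr : |r| ≤ 2*L) (b : ℝ) :
    |logit (clip L b) - r| ≤ 2 * (1 + Real.exp (2*L)) * |b - RLHF.sigmoid r| := by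
  obtain ⟨hp1, hp2⟩ := sigmoid_mem hr
  obtain ⟨hc1, hc2⟩ := clip_mem hL b
  calc |logit (clip L b) - r| = |logit (clip L b) - logit (RLHF.sigmoid r)| := by
        rw [logit_sigmoid]
    _ ≤ 2 * (1 + Real.exp (2*L)) * |clip L b - RLHF.sigmoid r| :=
        logit_lip hL hc1 hc2 hp1 hp2
    _ ≤ 2 * (1 + Real.exp (2*L)) * |b - RLHF.sigmoid r| := by
        have h := clip_dist hp1 hp2 b
        nlinarith [Real.exp_pos (2*L), abs_nonneg (clip L b - RLHF.sigmoid r)]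

/-! ### Integral helpers -/

omit [MeasureTheory.IsProbabilityMeasure P] in
lemma integrable_triple_sum {ι₁ ι₂ ι₃ : Type*} [Fintype ι₁] [Fintype ι₂] [Fintype ι₃]
    (f : ι₁ → ι₂ → ι₃ → Ω → ℝ) (hf : ∀ a b c, MeasureTheory.Integrable (f a b c) P) :
    MeasureTheory.Integrable (fun ω => ∑ a, ∑ b, ∑ c, f a b c ω) P :=
  MeasureTheory.integrable_finset_sum _ fun a _ =>
    MeasureTheory.integrable_finset_sum _ fun b _ =>
      MeasureTheory.integrable_finset_sum _ fun c _ => hf a b c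

omit [MeasureTheory.IsProbabilityMeasure P] in
lemma integral_triple_sum {ι₁ ι₂ ι₃ : Type*} [Fintype ι₁] [Fintype ι₂] [Fintype ι₃]
    (f : ι₁ → ι₂ → ι₃ → Ω → ℝ) (hf : ∀ a b c, MeasureTheory.Integrable (f a b c) P) :
    ∫ ω, (∑ a, ∑ b, ∑ c, f a b c ω) ∂P = ∑ a, ∑ b, ∑ c, ∫ ω, f a b c ω ∂P := by
  rw [MeasureTheory.integral_finset_sum _ (fun a _ =>
    MeasureTheory.integrable_finset_sum _ fun b _ =>
      MeasureTheory.integrable_finset_sum _ fun c _ => hf a b c)]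
  refine Finset.sum_congr rfl fun a _ => ?_
  rw [MeasureTheory.integral_finset_sum _ (fun b _ =>
    MeasureTheory.integrable_finset_sum _ fun c _ => hf a b c)]
  refine Finset.sum_congr rfl fun b _ => ?_
  exact MeasureTheory.integral_finset_sum _ (fun c _ => hf a b c)

omit [MeasureTheory.IsProbabilityMeasure P] in
lemma integrable_double_sum {ι₁ ι₂ : Type*} [Fintype ι₁] [Fintype ι₂]
    (f : ι₁ → ι₂ → Ω → ℝ) (hf : ∀ a b, MeasureTheory.Integrable (f a b) P) :
    MeasureTheory.Integrable (fun ω => ∑ a, ∑ b, f a b ω) P :=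
  MeasureTheory.integrable_finset_sum _ fun a _ =>
    MeasureTheory.integrable_finset_sum _ fun b _ => hf a b

omit [MeasureTheory.IsProbabilityMeasure P] in
lemma integral_double_sum {ι₁ ι₂ : Type*} [Fintype ι₁] [Fintype ι₂]
    (f : ι₁ → ι₂ → Ω → ℝ) (hf : ∀ a b, MeasureTheory.Integrable (f a b) P) :
    ∫ ω, (∑ a, ∑ b, f a b ω) ∂P = ∑ a, ∑ b, ∫ ω, f a b ω ∂P := by
  rw [MeasureTheory.integral_finset_sum _ (fun a _ =>
    MeasureTheory.integrable_finset_sum _ fun b _ => hf a b)]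
  exact Finset.sum_congr rfl fun a _ =>
    MeasureTheory.integral_finset_sum _ (fun b _ => hf a b)

end AuxLemmas


/-- **Proposition 3 (Worst-case upper bound for RL-LOW).**
There exists a constant `C > 0` depending only on `L` such that for every consistent
instance `v` and every `n ≥ 1` with `n·N_{k,i,j} ∈ ℕ`, and every measurable choice of
`î_k ∈ Î_k`, the expected simple regret of RL-LOW satisfies
`E[R_n] ≤ C·n^{−1/2}·Σ_{k, i ≠ i*_k} ρ_k·(√(γ_{k,i}) + γ̃_{k,i})`. -/
theorem rl_low_worst_case_upper_bound (L : ℝ) (hL : 0 < L) :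
    ∃ C : ℝ, 0 < C ∧
      ∀ (S A d : ℕ), 2 ≤ A →
      ∀ v : Inst S A d, (∀ k i, |v.r k i| ≤ L) → v.Consistent →
      ∀ istar : Fin S → Fin A, v.BestAction istar →
      ∀ w : Fin S → Fin A → Fin A → Fin S → Fin A → Fin A → ℝ,
        (∀ k i j, i ≠ j → v.IsLOW k i j (w k i j)) →
      ∀ n : ℕ, 1 ≤ n →
        (∀ k i j, ∃ m : ℕ, (m : ℝ) = n * v.N k i j) →
        ∀ (Ω : Type) [MeasurableSpace Ω] (P : MeasureTheory.Measure Ω),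
          MeasureTheory.IsProbabilityMeasure P →
        ∀ Y : Fin S → Fin A → Fin A → Ω → ℕ, IsBTLSample v n P Y →
        ∀ ihat : Ω → Fin S → Fin A,
          (∀ k a, MeasurableSet {ω | ihat ω k = a}) →
          (∀ ω k j, j ≠ ihat ω k →
            0 ≤ v.rhat L n w (fun k' i' j' => Y k' i' j' ω) k (ihat ω k) j) →
          ∫ ω, v.regret istar (ihat ω) ∂P ≤
            C / Real.sqrt n *
              ∑ k, ∑ i, if i ≠ istar k then
                v.ρ k * (Real.sqrt (v.cost (w k i (istar k))) +
                  v.gammaTilde (w k i (istar k))) else 0 := by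
  classical
  have hL0 : (0:ℝ) ≤ L := hL.le
  refine ⟨1 + Real.exp (2*L), by positivity, ?_⟩
  intro S A d hA v hr hcons istar hbest w hw n hn hNnat Ω mΩ P hP Y hBTL ihat hmeasihat hihat
  haveI := hP
  have hC0 : (0:ℝ) < 1 + Real.exp (2*L) := by positivity
  have hn0 : (0:ℝ) < n := by exact_mod_cast hn
  have hsn : (0:ℝ) < Real.sqrt n := Real.sqrt_pos.2 hn0
  set K : ℝ := 2 * (1 + Real.exp (2*L)) with hKdef
  have hK0 : (0:ℝ) < K := by rw [hKdef]; positivity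
  have hr2 : ∀ (a : Fin S) (b c : Fin A), |v.r a b - v.r a c| ≤ 2*L := by
    intro a b c
    have h1 := abs_le.1 (hr a b)
    have h2 := abs_le.1 (hr a c)
    rw [abs_le]
    constructor <;> linarith [h1.1, h1.2, h2.1, h2.2]
  -- per-triple error functions
  set e : Fin S → Fin A → Fin A → Ω → ℝ := fun a b c ω =>
    if 0 < v.N a b c then
      |v.B n (fun k' i' j' => Y k' i' j' ω) a b c - RLHF.sigmoid (v.r a b - v.r a c)| else 0
    with hedef
  have he_nonneg : ∀ a b c ω, 0 ≤ e a b c ω := by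
    intro a b c ω
    simp only [hedef]
    split
    · exact abs_nonneg _
    · exact le_refl 0
  set bnd : Fin S → Fin A → Fin A → ℝ := fun a b c =>
    if 0 < v.N a b c then 1/(2*(Real.sqrt n * Real.sqrt (v.N a b c))) else 0 with hbnddef
  have htri : ∀ a b c, 0 < v.N a b c →
      Integrable (e a b c) P ∧ ∫ ω, e a b c ω ∂P ≤ bnd a b c := by
    intro a b c hN
    obtain ⟨m, hm⟩ := hNnat a b c
    have hnN : (0:ℝ) < (n:ℝ) * v.N a b c := mul_pos hn0 hN
    have hm1 : 1 ≤ m := by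
      rcases Nat.eq_zero_or_pos m with h0 | h1
      · rw [h0] at hm
        simp only [Nat.cast_zero] at hm
        linarith
      · exact h1
    have hceil : ⌈(n:ℝ) * v.N a b c⌉₊ = m := by rw [← hm, Nat.ceil_natCast]
    have hlaw := hBTL.2.1 a b c hN
    rw [hceil] at hlaw
    have hp0 : 0 ≤ RLHF.sigmoid (v.r a b - v.r a c) := (_root_.sigmoid_pos _).le
    have hp1 : RLHF.sigmoid (v.r a b - v.r a c) ≤ 1 := (_root_.sigmoid_lt_one _).le
    have habs := binom_absdev (hBTL.1 a b c) hp0 hp1 hlaw hm1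
    have hee : e a b c = fun ω =>
        |((Y a b c ω : ℝ))/(m:ℝ) - RLHF.sigmoid (v.r a b - v.r a c)| := by
      funext ω
      simp only [hedef, if_pos hN, Inst.B, ← hm]
    have hsqrt : Real.sqrt (m:ℝ) = Real.sqrt n * Real.sqrt (v.N a b c) := by
      rw [hm, Real.sqrt_mul (Nat.cast_nonneg n)]
    constructor
    · rw [hee]; exact habs.1
    · rw [hee]
      simp only [hbnddef, if_pos hN, ← hsqrt]
      exact habs.2
  have he_int : ∀ a b c, Integrable (e a b c) P := by
    intro a b c
    by_cases hN : 0 < v.N a b c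
    · exact (htri a b c hN).1
    · have hz : e a b c = fun _ => (0:ℝ) := funext fun ω => by
        simp only [hedef, if_neg hN]
      rw [hz]
      exact integrable_const 0
  have hbnd_nonneg : ∀ a b c, 0 ≤ bnd a b c := by
    intro a b c
    simp only [hbnddef]
    split
    · positivity
    · exact le_refl 0
  have he_bnd : ∀ a b c, ∫ ω, e a b c ω ∂P ≤ bnd a b c := by
    intro a b c
    by_cases hN : 0 < v.N a b c
    · exact (htri a b c hN).2
    · have hz : e a b c = fun _ => (0:ℝ) := funext fun ω => by
        simp only [hedef, if_neg hN]
      rw [hz, integral_const, smul_eq_mul, mul_zero]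
      exact hbnd_nonneg a b c
  -- the majorant
  set E3 : Fin S → Fin A → Ω → ℝ := fun k i ω =>
    ∑ a, ∑ b, ∑ c, |w k i (istar k) a b c| * e a b c ω with hE3def
  have hE3_int : ∀ k i, Integrable (E3 k i) P := fun k i =>
    integrable_triple_sum _ fun a b c => (he_int a b c).const_mul _
  have hE3_nonneg : ∀ k i ω, 0 ≤ E3 k i ω := fun k i ω =>
    Finset.sum_nonneg fun a _ => Finset.sum_nonneg fun b _ =>
      Finset.sum_nonneg fun c _ => mul_nonneg (abs_nonneg _) (he_nonneg a b c ω)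
  have hE3_bnd : ∀ k i, ∫ ω, E3 k i ω ∂P ≤
      ∑ a, ∑ b, ∑ c, |w k i (istar k) a b c| * bnd a b c := by
    intro k i
    rw [hE3def]
    rw [integral_triple_sum _ fun a b c => (he_int a b c).const_mul _]
    refine Finset.sum_le_sum fun a _ => Finset.sum_le_sum fun b _ =>
      Finset.sum_le_sum fun c _ => ?_
    rw [MeasureTheory.integral_const_mul]
    exact mul_le_mul_of_nonneg_left (he_bnd a b c) (abs_nonneg _)
  set cc : Fin S → Fin A → ℝ := fun k i => if i ≠ istar k then v.ρ k * K else 0 with hccdef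
  have hcc_nonneg : ∀ k i, 0 ≤ cc k i := by
    intro k i
    simp only [hccdef]
    split
    · exact mul_nonneg (v.ρ_pos k).le hK0.le
    · exact le_refl 0
  set G : Ω → ℝ := fun ω => ∑ k, ∑ i, cc k i * E3 k i ω with hGdef
  have hG_int : Integrable G P :=
    integrable_double_sum _ fun k i => (hE3_int k i).const_mul _
  -- pointwise bound on the regret
  have step1 : ∀ ω, v.regret istar (ihat ω) ≤ G ω := by
    intro ω
    rw [Inst.regret, hGdef]
    refine Finset.sum_le_sum fun k _ => ?_
    by_cases hcase : ihat ω k = istar k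
    · rw [hcase, sub_self, mul_zero]
      exact Finset.sum_nonneg fun i _ =>
        mul_nonneg (hcc_nonneg k i) (hE3_nonneg k i ω)
    · -- main estimation
      have hfeas := (hw k (ihat ω k) (istar k) hcase).1
      have hzero : ∀ a b c, v.N a b c = 0 → w k (ihat ω k) (istar k) a b c = 0 := hfeas.1
      have hrhat := hihat ω k (istar k) (Ne.symm hcase)
      rw [Inst.rhat, if_neg hcase] at hrhat
      -- representation of the reward difference
      have hrepr : v.r k (ihat ω k) - v.r k (istar k)
          = ∑ a, ∑ b, ∑ c, w k (ihat ω k) (istar k) a b c * (v.r a b - v.r a c) := by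
        have h2 := hfeas.2
        have h3 : v.r k (ihat ω k) - v.r k (istar k)
            = @inner ℝ _ _ (v.φ k (ihat ω k) - v.φ k (istar k)) v.θ := by
          rw [inner_sub_left]; rfl
        rw [h3, h2]
        rw [sum_inner]
        refine Finset.sum_congr rfl fun a _ => ?_
        rw [sum_inner]
        refine Finset.sum_congr rfl fun b _ => ?_
        rw [sum_inner]
        refine Finset.sum_congr rfl fun c _ => ?_
        rw [real_inner_smul_left, inner_sub_left]
        rfl
      -- per-triple bound
      have hterm : ∀ (a : Fin S) (b c : Fin A),
          w k (ihat ω k) (istar k) a b c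
              * logit (clip L (v.B n (fun k' i' j' => Y k' i' j' ω) a b c))
            - w k (ihat ω k) (istar k) a b c * (v.r a b - v.r a c)
          ≤ K * (|w k (ihat ω k) (istar k) a b c| * e a b c ω) := by
        intro a b c
        by_cases hN : 0 < v.N a b c
        · have hdist := logit_clip_dist hL0 (hr2 a b c)
            (v.B n (fun k' i' j' => Y k' i' j' ω) a b c)
          have he_eq : e a b c ω
              = |v.B n (fun k' i' j' => Y k' i' j' ω) a b c - RLHF.sigmoid (v.r a b - v.r a c)| := by
            simp only [hedef, if_pos hN]
          calc w k (ihat ω k) (istar k) a b c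
                  * logit (clip L (v.B n (fun k' i' j' => Y k' i' j' ω) a b c))
                - w k (ihat ω k) (istar k) a b c * (v.r a b - v.r a c)
              = w k (ihat ω k) (istar k) a b c
                  * (logit (clip L (v.B n (fun k' i' j' => Y k' i' j' ω) a b c))
                    - (v.r a b - v.r a c)) := by ring
            _ ≤ |w k (ihat ω k) (istar k) a b c
                  * (logit (clip L (v.B n (fun k' i' j' => Y k' i' j' ω) a b c))
                    - (v.r a b - v.r a c))| := le_abs_self _
            _ = |w k (ihat ω k) (istar k) a b c|
                  * |logit (clip L (v.B n (fun k' i' j' => Y k' i' j' ω) a b c))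
                    - (v.r a b - v.r a c)| := abs_mul _ _
            _ ≤ |w k (ihat ω k) (istar k) a b c|
                  * (K * |v.B n (fun k' i' j' => Y k' i' j' ω) a b c
                      - RLHF.sigmoid (v.r a b - v.r a c)|) :=
                mul_le_mul_of_nonneg_left (by rw [hKdef]; exact hdist) (abs_nonneg _)
            _ = K * (|w k (ihat ω k) (istar k) a b c| * e a b c ω) := by
                rw [he_eq]; ring
        · have hNz : v.N a b c = 0 :=
            le_antisymm (not_lt.1 hN) (v.N_nonneg a b c)
          rw [hzero a b c hNz]
          simp
      have key : v.r k (istar k) - v.r k (ihat ω k) ≤ K * E3 k (ihat ω k) ω := by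
        have hs1 : v.r k (istar k) - v.r k (ihat ω k)
            ≤ (∑ a, ∑ b, ∑ c, w k (ihat ω k) (istar k) a b c
                * logit (clip L (v.B n (fun k' i' j' => Y k' i' j' ω) a b c)))
              - (v.r k (ihat ω k) - v.r k (istar k)) := by
          linarith [hrhat]
        have hs2 : (∑ a, ∑ b, ∑ c, w k (ihat ω k) (istar k) a b c
                * logit (clip L (v.B n (fun k' i' j' => Y k' i' j' ω) a b c)))
              - (v.r k (ihat ω k) - v.r k (istar k))
            = ∑ a, ∑ b, ∑ c, (w k (ihat ω k) (istar k) a b c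
                * logit (clip L (v.B n (fun k' i' j' => Y k' i' j' ω) a b c))
              - w k (ihat ω k) (istar k) a b c * (v.r a b - v.r a c)) := by
          rw [hrepr]
          simp only [← Finset.sum_sub_distrib]
        have hs3 : (∑ a, ∑ b, ∑ c, (w k (ihat ω k) (istar k) a b c
                * logit (clip L (v.B n (fun k' i' j' => Y k' i' j' ω) a b c))
              - w k (ihat ω k) (istar k) a b c * (v.r a b - v.r a c)))
            ≤ ∑ a, ∑ b, ∑ c, K * (|w k (ihat ω k) (istar k) a b c| * e a b c ω) :=
          Finset.sum_le_sum fun a _ => Finset.sum_le_sum fun b _ =>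
            Finset.sum_le_sum fun c _ => hterm a b c
        have hs4 : (∑ a, ∑ b, ∑ c, K * (|w k (ihat ω k) (istar k) a b c| * e a b c ω))
            = K * E3 k (ihat ω k) ω := by
          rw [hE3def]
          simp only [Finset.mul_sum]
        linarith [hs1, hs2 ▸ hs1, hs3, hs4]
      calc v.ρ k * (v.r k (istar k) - v.r k (ihat ω k))
          ≤ v.ρ k * (K * E3 k (ihat ω k) ω) :=
            mul_le_mul_of_nonneg_left key (v.ρ_pos k).le
        _ = cc k (ihat ω k) * E3 k (ihat ω k) ω := by
            simp only [hccdef, if_pos hcase]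
            ring
        _ ≤ ∑ i, cc k i * E3 k i ω := by
            refine Finset.single_le_sum (f := fun i => cc k i * E3 k i ω)
              (fun i _ => mul_nonneg (hcc_nonneg k i) (hE3_nonneg k i ω))
              (Finset.mem_univ _)
  -- regret is nonnegative
  have hreg_nonneg : ∀ ω, 0 ≤ v.regret istar (ihat ω) := by
    intro ω
    refine Finset.sum_nonneg fun k _ => mul_nonneg (v.ρ_pos k).le (sub_nonneg.2 ?_)
    by_cases hcase : ihat ω k = istar k
    · rw [hcase]
    · exact (hbest k (ihat ω k) hcase).le
  -- putting everything together
  calc ∫ ω, v.regret istar (ihat ω) ∂P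
      ≤ ∫ ω, G ω ∂P :=
        integral_mono_of_nonneg (Filter.Eventually.of_forall hreg_nonneg) hG_int
          (Filter.Eventually.of_forall step1)
    _ = ∑ k, ∑ i, cc k i * ∫ ω, E3 k i ω ∂P := by
        rw [hGdef, integral_double_sum _ fun k i => (hE3_int k i).const_mul _]
        exact Finset.sum_congr rfl fun k _ => Finset.sum_congr rfl fun i _ =>
          MeasureTheory.integral_const_mul _ _
    _ ≤ ∑ k, ∑ i, cc k i * (∑ a, ∑ b, ∑ c, |w k i (istar k) a b c| * bnd a b c) :=
        Finset.sum_le_sum fun k _ => Finset.sum_le_sum fun i _ =>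
          mul_le_mul_of_nonneg_left (hE3_bnd k i) (hcc_nonneg k i)
    _ ≤ (1 + Real.exp (2*L)) / Real.sqrt n *
          ∑ k, ∑ i, if i ≠ istar k then
            v.ρ k * (Real.sqrt (v.cost (w k i (istar k))) +
              v.gammaTilde (w k i (istar k))) else 0 := by
        rw [Finset.mul_sum]
        refine Finset.sum_le_sum fun k _ => ?_
        rw [Finset.mul_sum]
        refine Finset.sum_le_sum fun i _ => ?_
        by_cases hcase : i ≠ istar k
        · simp only [hccdef, if_pos hcase]
          have hgt : (∑ a, ∑ b, ∑ c, |w k i (istar k) a b c| * bnd a b c)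
              = 1/(2*Real.sqrt n) * v.gammaTilde (w k i (istar k)) := by
            rw [Inst.gammaTilde, Finset.mul_sum]
            refine Finset.sum_congr rfl fun a _ => ?_
            rw [Finset.mul_sum]
            refine Finset.sum_congr rfl fun b _ => ?_
            rw [Finset.mul_sum]
            refine Finset.sum_congr rfl fun c _ => ?_
            by_cases hN : 0 < v.N a b c
            · simp only [hbnddef, if_pos hN]
              have hsN : (0:ℝ) < Real.sqrt (v.N a b c) := Real.sqrt_pos.2 hN
              rw [mul_one_div, one_div_mul_eq_div, div_div]
              ring_nf
            · simp only [hbnddef, if_neg hN, mul_zero]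
          rw [hgt]
          have hcost : 0 ≤ Real.sqrt (v.cost (w k i (istar k))) := Real.sqrt_nonneg _
          have hgamma : 0 ≤ v.gammaTilde (w k i (istar k)) := by
            refine Finset.sum_nonneg fun a _ => Finset.sum_nonneg fun b _ =>
              Finset.sum_nonneg fun c _ => ?_
            split
            · positivity
            · exact le_refl 0
          have hid : v.ρ k * K * (1/(2*Real.sqrt n) * v.gammaTilde (w k i (istar k)))
              = (1 + Real.exp (2*L)) / Real.sqrt n * (v.ρ k * v.gammaTilde (w k i (istar k))) := by
            rw [hKdef]
            field_simp
          rw [hid]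
          have hrk : 0 ≤ v.ρ k := (v.ρ_pos k).le
          have hfac : (0:ℝ) ≤ (1 + Real.exp (2*L)) / Real.sqrt n := by positivity
          refine mul_le_mul_of_nonneg_left ?_ hfac
          nlinarith [hrk, hcost, hgamma]
        · simp only [hccdef, if_neg hcase, zero_mul]
          positivity
end

section
/- Transitivity of RL-LOW estimates (Proposition 2): For any consistent offline RLHF instance and any realization of the data, the RL-LOW estimates satisfy: the set Î_k = {i ∈ 𝒜 : r̂_{k,i,j} ≥ 0 for all j ≠ i} is nonempty for every state k, and for any j₁, j₂ ∈ 𝒜, argmax_{i∈𝒜} r̂_{k,i,j₁} = argmax_{i∈𝒜} r̂_{k,i,j₂} = Î_k. -/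
open MeasureTheory ProbabilityTheory Real

open RLHF

namespace RLHF
namespace Inst

variable {S A d : ℕ}

/-- Weighted inner product associated to the cost. -/
noncomputable def innerN (v : Inst S A d) (u z : Fin S → Fin A → Fin A → ℝ) : ℝ :=
  ∑ k', ∑ i', ∑ j',
    if 0 < v.N k' i' j' then u k' i' j' * z k' i' j' / v.N k' i' j' else 0

/-- Kernel of the constraint map. -/
def Ker (v : Inst S A d) (z : Fin S → Fin A → Fin A → ℝ) : Prop :=
  (∀ a b c, v.N a b c = 0 → z a b c = 0) ∧
  ∑ a, ∑ b, ∑ c, z a b c • (v.φ a b - v.φ a c) = 0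

lemma cost_eq_innerN (v : Inst S A d) (u : Fin S → Fin A → Fin A → ℝ) :
    v.cost u = v.innerN u u := by
  unfold cost innerN
  refine Finset.sum_congr rfl fun a _ => Finset.sum_congr rfl fun b _ =>
    Finset.sum_congr rfl fun c _ => ?_
  split_ifs with h
  · ring
  · rfl

lemma cost_nonneg (v : Inst S A d) (u : Fin S → Fin A → Fin A → ℝ) :
    0 ≤ v.cost u := by
  unfold cost
  refine Finset.sum_nonneg fun a _ => Finset.sum_nonneg fun b _ =>
    Finset.sum_nonneg fun c _ => ?_
  split_ifs with h
  · positivity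
  · exact le_refl 0

lemma cost_expand (v : Inst S A d) (u z : Fin S → Fin A → Fin A → ℝ) (t : ℝ) :
    v.cost (fun a b c => u a b c + t * z a b c)
      = v.cost u + 2 * t * v.innerN u z + t ^ 2 * v.cost z := by
  unfold cost innerN
  simp only [Finset.mul_sum, ← Finset.sum_add_distrib]
  refine Finset.sum_congr rfl fun a _ => Finset.sum_congr rfl fun b _ =>
    Finset.sum_congr rfl fun c _ => ?_
  split_ifs with h
  · field_simp
    ring
  · ring

lemma innerN_sub_left (v : Inst S A d) (u u' z : Fin S → Fin A → Fin A → ℝ) :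
    v.innerN (fun a b c => u a b c - u' a b c) z = v.innerN u z - v.innerN u' z := by
  unfold innerN
  simp only [← Finset.sum_sub_distrib]
  refine Finset.sum_congr rfl fun a _ => Finset.sum_congr rfl fun b _ =>
    Finset.sum_congr rfl fun c _ => ?_
  split_ifs with h
  · ring
  · ring

lemma innerN_neg_left (v : Inst S A d) (u z : Fin S → Fin A → Fin A → ℝ) :
    v.innerN (fun a b c => -(u a b c)) z = -v.innerN u z := by
  unfold innerN
  simp only [← Finset.sum_neg_distrib]
  refine Finset.sum_congr rfl fun a _ => Finset.sum_congr rfl fun b _ =>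
    Finset.sum_congr rfl fun c _ => ?_
  split_ifs with h
  · ring
  · ring

lemma feasible_add_ker (v : Inst S A d) {k : Fin S} {i j : Fin A}
    {u z : Fin S → Fin A → Fin A → ℝ} (hu : v.Feasible k i j u) (hz : v.Ker z)
    (t : ℝ) : v.Feasible k i j (fun a b c => u a b c + t * z a b c) := by
  constructor
  · intro a b c h
    show u a b c + t * z a b c = 0
    rw [hu.1 a b c h, hz.1 a b c h]
    ring
  · have expand : (∑ a, ∑ b, ∑ c, (u a b c + t * z a b c) • (v.φ a b - v.φ a c))
        = (∑ a, ∑ b, ∑ c, u a b c • (v.φ a b - v.φ a c))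
          + t • ∑ a, ∑ b, ∑ c, z a b c • (v.φ a b - v.φ a c) := by
      simp only [add_smul, mul_smul, Finset.sum_add_distrib, Finset.smul_sum]
    rw [expand, hz.2, smul_zero, add_zero]
    exact hu.2

lemma ker_of_feasible_sub (v : Inst S A d) {k : Fin S} {i j : Fin A}
    {u u' : Fin S → Fin A → Fin A → ℝ} (hu : v.Feasible k i j u)
    (hu' : v.Feasible k i j u') : v.Ker (fun a b c => u a b c - u' a b c) := by
  constructor
  · intro a b c h
    show u a b c - u' a b c = 0
    rw [hu.1 a b c h, hu'.1 a b c h]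
    ring
  · simp only [sub_smul, Finset.sum_sub_distrib]
    rw [← hu.2, ← hu'.2, sub_self]

lemma isLOW_orth (v : Inst S A d) {k : Fin S} {i j : Fin A}
    {w₀ : Fin S → Fin A → Fin A → ℝ} (h : v.IsLOW k i j w₀)
    (z : Fin S → Fin A → Fin A → ℝ) (hz : v.Ker z) : v.innerN w₀ z = 0 := by
  have key : ∀ t : ℝ, 0 ≤ 2 * t * v.innerN w₀ z + t ^ 2 * v.cost z := by
    intro t
    have hf := v.feasible_add_ker h.1 hz t
    have hle := h.2 _ hf
    rw [cost_expand] at hle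
    linarith
  set a := v.innerN w₀ z with ha
  set b := v.cost z with hb
  have hbnn : 0 ≤ b := v.cost_nonneg z
  have hb1 : (0:ℝ) < b + 1 := by linarith
  have h1 := key (-(a / (b + 1)))
  have hc : a = (a / (b + 1)) * (b + 1) := by field_simp
  set c := a / (b + 1) with hcdef
  rw [hc] at h1
  have hcz : c = 0 := by nlinarith [sq_nonneg c]
  rw [hc, hcz, zero_mul]

lemma isLOW_of_orth (v : Inst S A d) {k : Fin S} {i j : Fin A}
    {w₀ : Fin S → Fin A → Fin A → ℝ} (hf : v.Feasible k i j w₀)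
    (ho : ∀ z, v.Ker z → v.innerN w₀ z = 0) : v.IsLOW k i j w₀ := by
  refine ⟨hf, fun u hu => ?_⟩
  have hz := v.ker_of_feasible_sub hu hf
  have e : (fun a b c => w₀ a b c + (1:ℝ) * (u a b c - w₀ a b c)) = u := by
    funext a b c
    ring
  have hexp := v.cost_expand w₀ (fun a b c => u a b c - w₀ a b c) 1
  rw [e] at hexp
  rw [hexp, ho _ hz]
  have := v.cost_nonneg (fun a b c => u a b c - w₀ a b c)
  linarith

lemma sum3_eq_zero {f : Fin S → Fin A → Fin A → ℝ} (hnn : ∀ a b c, 0 ≤ f a b c)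
    (h : ∑ a, ∑ b, ∑ c, f a b c = 0) : ∀ a b c, f a b c = 0 := by
  intro a b c
  have h1 := (Finset.sum_eq_zero_iff_of_nonneg
    (fun a _ => Finset.sum_nonneg fun b _ => Finset.sum_nonneg fun c _ => hnn a b c)).mp
    h a (Finset.mem_univ a)
  have h2 := (Finset.sum_eq_zero_iff_of_nonneg
    (fun b _ => Finset.sum_nonneg fun c _ => hnn a b c)).mp h1 b (Finset.mem_univ b)
  exact (Finset.sum_eq_zero_iff_of_nonneg (fun c _ => hnn a b c)).mp h2 c (Finset.mem_univ c)

lemma isLOW_unique (v : Inst S A d) {k : Fin S} {i j : Fin A}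
    {w₁ w₂ : Fin S → Fin A → Fin A → ℝ} (h1 : v.IsLOW k i j w₁)
    (h2 : v.IsLOW k i j w₂) : ∀ a b c, w₁ a b c = w₂ a b c := by
  have hz : v.Ker (fun a b c => w₁ a b c - w₂ a b c) :=
    v.ker_of_feasible_sub h1.1 h2.1
  have e1 := v.isLOW_orth h1 _ hz
  have e2 := v.isLOW_orth h2 _ hz
  have hc0 : v.cost (fun a b c => w₁ a b c - w₂ a b c) = 0 := by
    rw [cost_eq_innerN, innerN_sub_left, e1, e2, sub_zero]
  have hterm : ∀ a b c, (if 0 < v.N a b c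
      then (w₁ a b c - w₂ a b c) ^ 2 / v.N a b c else 0) = 0 := by
    apply sum3_eq_zero
    · intro a b c
      split_ifs with h
      · positivity
      · exact le_refl 0
    · exact hc0
  intro a b c
  by_cases hN : 0 < v.N a b c
  · have := hterm a b c
    rw [if_pos hN] at this
    rcases div_eq_zero_iff.mp this with h | h
    · have := (pow_eq_zero_iff two_ne_zero).mp h
      linarith [sub_eq_zero.mp this]
    · exact absurd h hN.ne'
  · have hN0 : v.N a b c = 0 := le_antisymm (not_lt.mp hN) (v.N_nonneg a b c)
    rw [h1.1.1 a b c hN0, h2.1.1 a b c hN0]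

lemma isLOW_neg (v : Inst S A d) {k : Fin S} {i j : Fin A}
    {w₀ : Fin S → Fin A → Fin A → ℝ} (h : v.IsLOW k j i w₀) :
    v.IsLOW k i j (fun a b c => -(w₀ a b c)) := by
  apply v.isLOW_of_orth
  · constructor
    · intro a b c hh
      show -(w₀ a b c) = 0
      rw [h.1.1 a b c hh, neg_zero]
    · simp only [neg_smul, Finset.sum_neg_distrib]
      rw [← h.1.2]
      abel
  · intro z hz
    rw [innerN_neg_left, v.isLOW_orth h z hz, neg_zero]

lemma isLOW_sub (v : Inst S A d) {k : Fin S} {i j l : Fin A}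
    {w₁ w₂ : Fin S → Fin A → Fin A → ℝ} (h1 : v.IsLOW k i l w₁)
    (h2 : v.IsLOW k j l w₂) :
    v.IsLOW k i j (fun a b c => w₁ a b c - w₂ a b c) := by
  apply v.isLOW_of_orth
  · constructor
    · intro a b c hh
      show w₁ a b c - w₂ a b c = 0
      rw [h1.1.1 a b c hh, h2.1.1 a b c hh]
      ring
    · simp only [sub_smul, Finset.sum_sub_distrib]
      rw [← h1.1.2, ← h2.1.2]
      abel
  · intro z hz
    rw [innerN_sub_left, v.isLOW_orth h1 z hz, v.isLOW_orth h2 z hz, sub_zero]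

end Inst
end RLHF

/-- **Proposition 2 (Transitivity of the RL-LOW estimates).**
For any consistent instance and any realization `y` of the data, the set
`Î_k = {i : r̂_{k,i,j} ≥ 0 for all j ≠ i}` is nonempty, and for all `j₁, j₂`,
`argmax_i r̂_{k,i,j₁} = argmax_i r̂_{k,i,j₂} = Î_k`. -/
theorem rl_low_transitivity (L : ℝ) (hL : 0 < L) (S A d : ℕ) (hA : 2 ≤ A)
    (v : Inst S A d) (hr : ∀ k i, |v.r k i| ≤ L) (hcons : v.Consistent)
    (w : Fin S → Fin A → Fin A → Fin S → Fin A → Fin A → ℝ)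
    (hw : ∀ k i j, i ≠ j → v.IsLOW k i j (w k i j))
    (n : ℕ) (y : Fin S → Fin A → Fin A → ℕ) (k : Fin S) :
    {i : Fin A | ∀ j, j ≠ i → 0 ≤ v.rhat L n w y k i j}.Nonempty ∧
    ∀ j₁ j₂ : Fin A,
      {i : Fin A | ∀ i', v.rhat L n w y k i' j₁ ≤ v.rhat L n w y k i j₁} =
        {i : Fin A | ∀ i', v.rhat L n w y k i' j₂ ≤ v.rhat L n w y k i j₂} ∧
      {i : Fin A | ∀ i', v.rhat L n w y k i' j₁ ≤ v.rhat L n w y k i j₁} =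
        {i : Fin A | ∀ j, j ≠ i → 0 ≤ v.rhat L n w y k i j} := by
  have hA0 : 0 < A := by omega
  set l : Fin A := ⟨0, hA0⟩ with hldef
  set g : Fin A → ℝ := fun i => v.rhat L n w y k i l with hgdef
  have hg0 : g l = 0 := by simp [hgdef, Inst.rhat]
  -- additivity of the estimates
  have hadd : ∀ i j, v.rhat L n w y k i j = g i - g j := by
    intro i j
    by_cases hij : i = j
    · subst hij
      simp [Inst.rhat]
    by_cases hjl : j = l
    · subst hjl
      rw [hg0, sub_zero]
    by_cases hil : i = l
    · subst hil
      rw [hg0, zero_sub]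
      have hneg := v.isLOW_neg (hw k j l hjl)
      have huniq := v.isLOW_unique (hw k l j (Ne.symm hjl)) hneg
      simp only [hgdef, Inst.rhat, if_neg hij, if_neg hjl, ← Finset.sum_neg_distrib]
      refine Finset.sum_congr rfl fun a _ => Finset.sum_congr rfl fun b _ =>
        Finset.sum_congr rfl fun c _ => ?_
      rw [huniq a b c]
      ring
    · have hsub := v.isLOW_sub (hw k i l hil) (hw k j l hjl)
      have huniq := v.isLOW_unique (hw k i j hij) hsub
      simp only [hgdef, Inst.rhat, if_neg hij, if_neg hil, if_neg hjl,
        ← Finset.sum_sub_distrib]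
      refine Finset.sum_congr rfl fun a _ => Finset.sum_congr rfl fun b _ =>
        Finset.sum_congr rfl fun c _ => ?_
      rw [huniq a b c]
      ring
  have hmax : ∀ jj : Fin A,
      {i : Fin A | ∀ i', v.rhat L n w y k i' jj ≤ v.rhat L n w y k i jj}
        = {i : Fin A | ∀ i', g i' ≤ g i} := by
    intro jj
    ext i
    simp only [Set.mem_setOf_eq, hadd]
    exact ⟨fun h i' => by linarith [h i'], fun h i' => by linarith [h i']⟩
  have hI : {i : Fin A | ∀ j, j ≠ i → 0 ≤ v.rhat L n w y k i j}
      = {i : Fin A | ∀ i', g i' ≤ g i} := by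
    ext i
    simp only [Set.mem_setOf_eq, hadd]
    constructor
    · intro h i'
      by_cases hii : i' = i
      · subst hii; exact le_refl _
      · linarith [h i' hii]
    · intro h j _
      linarith [h j]
  haveI : Nonempty (Fin A) := ⟨l⟩
  obtain ⟨i0, hi0⟩ := Finite.exists_max g
  refine ⟨⟨i0, fun j hj => by rw [hadd]; linarith [hi0 j]⟩,
    fun j₁ j₂ => ⟨by rw [hmax j₁, hmax j₂], by rw [hmax j₁, hI]⟩⟩
end

section
/- Worst-case upper bound for DP-RL-LOW (Proposition H): There exists a constant C > 0 depending only on L such that for every consistent offline RLHF instance v, every ε, δ ∈ (0,1), and every n ≥ 1 with n·N_{k,i,j} ∈ ℕ, the expected simple regret of DP-RL-LOW satisfies E[R_n] ≤ C·( n^{−1/2}·Σ_{k, i≠i*_k} ρ_k(√(γ_{k,i}) + γ̃_{k,i}) + (√(log(1.25/δ))/(εn))·Σ_{k, i≠i*_k} ρ_k(√(γ^DP_{k,i}) + γ̃^DP_{k,i}) ), where γ̃_{k,i} = Σ_{N_{k',i',j'}>0} |w^{(k,i,i*_k)}_{k',i',j'}|/√(N_{k',i',j'}), γ^DP_{k,i}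 = Σ_{N_{k',i',j'}>0} (w^{(k,i,i*_k)}_{k',i',j'}/N_{k',i',j'})², and γ̃^DP_{k,i} = Σ_{N_{k',i',j'}>0} |w^{(k,i,i*_k)}_{k',i',j'}|/N_{k',i',j'}. -/
open MeasureTheory ProbabilityTheory Real

open RLHF


lemma aux_amgm (s x : ℝ) (hs : 0 < s) : |x| ≤ x^2/(2*s) + s/2 := by
  have h : 2*s*|x| ≤ x^2 + s^2 := by nlinarith [sq_nonneg (|x| - s), sq_abs x]
  have h2 : |x| = (2*s*|x|)/(2*s) := by field_simp
  rw [h2]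
  calc (2*s*|x|)/(2*s) ≤ (x^2 + s^2)/(2*s) := by gcongr
    _ = x^2/(2*s) + s/2 := by field_simp

lemma aux_log_lip' {a x y : ℝ} (ha : 0 < a) (hx : a ≤ x) (hy : a ≤ y) (hxy : y ≤ x) :
    Real.log x - Real.log y ≤ (x - y) / a := by
  have hy0 : 0 < y := lt_of_lt_of_le ha hy
  have hx0 : 0 < x := lt_of_lt_of_le ha hx
  have h1 : Real.log x - Real.log y = Real.log (x / y) := (Real.log_div hx0.ne' hy0.ne').symm
  rw [h1]
  have h2 : Real.log (x / y) ≤ x / y - 1 := Real.log_le_sub_one_of_pos (by positivity)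
  have h3 : x / y - 1 = (x - y) / y := by field_simp
  have h4 : (x - y) / y ≤ (x - y) / a := div_le_div_of_nonneg_left (by linarith) ha hy
  linarith

lemma aux_log_lip {a x y : ℝ} (ha : 0 < a) (hx : a ≤ x) (hy : a ≤ y) :
    |Real.log x - Real.log y| ≤ |x - y| / a := by
  rcases le_total y x with h | h
  · rw [abs_of_nonneg (sub_nonneg.2 (Real.log_le_log (lt_of_lt_of_le ha hy) h)),
      abs_of_nonneg (sub_nonneg.2 h)]
    exact aux_log_lip' ha hx hy h
  · rw [abs_sub_comm, abs_sub_comm x y,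
      abs_of_nonneg (sub_nonneg.2 (Real.log_le_log (lt_of_lt_of_le ha hx) h)),
      abs_of_nonneg (sub_nonneg.2 h)]
    exact aux_log_lip' ha hy hx h
section Aux
variable {L x y u v Δ : ℝ}

lemma aux_sigmoid_pos : 0 < RLHF.sigmoid x := by
  unfold RLHF.sigmoid; positivity

lemma aux_sigmoid_lt_one : RLHF.sigmoid x < 1 := by
  unfold RLHF.sigmoid
  rw [div_lt_one (by positivity)]
  linarith

lemma aux_sigmoid_bounds (hx : |x| ≤ 2*L) :
    1/(1 + Real.exp (2*L)) ≤ RLHF.sigmoid x ∧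
      RLHF.sigmoid x ≤ Real.exp (2*L)/(1 + Real.exp (2*L)) := by
  obtain ⟨h1, h2⟩ := abs_le.1 hx
  have he : (0:ℝ) < 1 + Real.exp x := by positivity
  have he' : (0:ℝ) < 1 + Real.exp (2*L) := by positivity
  unfold RLHF.sigmoid
  constructor
  · rw [div_le_div_iff₀ he' he]
    have : (1:ℝ) ≤ Real.exp (x + 2*L) := Real.one_le_exp (by linarith)
    rw [Real.exp_add] at this
    nlinarith
  · rw [div_le_div_iff₀ he he']
    have : Real.exp x ≤ Real.exp (2*L) := Real.exp_le_exp.2 h2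
    nlinarith [Real.exp_pos x, Real.exp_pos (2*L)]

lemma aux_logit_sigmoid : RLHF.logit (RLHF.sigmoid x) = x := by
  unfold RLHF.logit RLHF.sigmoid
  have he : (0:ℝ) < 1 + Real.exp x := by positivity
  have h1 : Real.exp x / (1 + Real.exp x) / (1 - Real.exp x / (1 + Real.exp x))
      = Real.exp x := by
    field_simp
    ring
  rw [h1, Real.log_exp]

lemma aux_clip_lower : 1/(1 + Real.exp (2*L)) ≤ RLHF.clip L x := le_max_left _ _

lemma aux_clip_upper (hL : 0 ≤ L) : RLHF.clip L x ≤ Real.exp (2*L)/(1 + Real.exp (2*L)) := by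
  have h1 : (1:ℝ) ≤ Real.exp (2*L) := Real.one_le_exp (by linarith)
  have he' : (0:ℝ) < 1 + Real.exp (2*L) := by positivity
  exact max_le (by gcongr) (min_le_left _ _)

lemma aux_clip_eq (h1 : 1/(1 + Real.exp (2*L)) ≤ x)
    (h2 : x ≤ Real.exp (2*L)/(1 + Real.exp (2*L))) : RLHF.clip L x = x := by
  unfold RLHF.clip
  rw [min_eq_right h2, max_eq_right h1]

lemma aux_clip_lip : |RLHF.clip L x - RLHF.clip L y| ≤ |x - y| := by
  unfold RLHF.clip
  set a := 1/(1 + Real.exp (2*L))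
  set b := Real.exp (2*L)/(1 + Real.exp (2*L))
  have h1 : |max a (min b x) - max a (min b y)| ≤ |min b x - min b y| := by
    rw [max_comm a _, max_comm a _]
    exact abs_max_sub_max_le_abs _ _ _
  have h2 : |min b x - min b y| ≤ |x - y| := by
    simpa using abs_min_sub_min_le_max b x b y
  exact h1.trans h2


lemma aux_logit_lip (hL : 0 ≤ L)
    (hu1 : 1/(1 + Real.exp (2*L)) ≤ u) (hu2 : u ≤ Real.exp (2*L)/(1 + Real.exp (2*L)))
    (hv1 : 1/(1 + Real.exp (2*L)) ≤ v) (hv2 : v ≤ Real.exp (2*L)/(1 + Real.exp (2*L))) :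
    |RLHF.logit u - RLHF.logit v| ≤ 2*(1 + Real.exp (2*L)) * |u - v| := by
  set a := 1/(1 + Real.exp (2*L)) with ha_def
  have he' : (0:ℝ) < 1 + Real.exp (2*L) := by positivity
  have ha : 0 < a := by positivity
  have hsub : 1 - Real.exp (2*L)/(1 + Real.exp (2*L)) = a := by
    rw [ha_def]; field_simp; ring
  have hu0 : 0 < u := lt_of_lt_of_le ha hu1
  have hv0 : 0 < v := lt_of_lt_of_le ha hv1
  have hu1' : a ≤ 1 - u := by rw [← hsub]; linarith
  have hv1' : a ≤ 1 - v := by rw [← hsub]; linarith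
  have hu1'' : (0:ℝ) < 1 - u := lt_of_lt_of_le ha hu1'
  have hv1'' : (0:ℝ) < 1 - v := lt_of_lt_of_le ha hv1'
  have elu : RLHF.logit u = Real.log u - Real.log (1 - u) := by
    unfold RLHF.logit; rw [Real.log_div hu0.ne' hu1''.ne']
  have elv : RLHF.logit v = Real.log v - Real.log (1 - v) := by
    unfold RLHF.logit; rw [Real.log_div hv0.ne' hv1''.ne']
  have h1 : |Real.log u - Real.log v| ≤ |u - v|/a := aux_log_lip ha hu1 hv1
  have h2 : |Real.log (1-u) - Real.log (1-v)| ≤ |u - v|/a := by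
    have := aux_log_lip ha hu1' hv1'
    rwa [show (1-u) - (1-v) = -(u - v) by ring, abs_neg] at this
  have h3 : |RLHF.logit u - RLHF.logit v| ≤
      |Real.log u - Real.log v| + |Real.log (1-u) - Real.log (1-v)| := by
    rw [elu, elv]
    calc |Real.log u - Real.log (1 - u) - (Real.log v - Real.log (1 - v))|
        = |(Real.log u - Real.log v) - (Real.log (1-u) - Real.log (1-v))| := by ring_nf
      _ ≤ _ := abs_sub _ _
  have h4 : |u - v|/a + |u - v|/a = 2*(1 + Real.exp (2*L)) * |u - v| := by
    rw [ha_def]; field_simp; ring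
  linarith

lemma aux_key (hL : 0 ≤ L) (hΔ : |Δ| ≤ 2*L) (y : ℝ) :
    |RLHF.logit (RLHF.clip L y) - Δ| ≤
      2*(1 + Real.exp (2*L)) * |y - RLHF.sigmoid Δ| := by
  obtain ⟨hs1, hs2⟩ := aux_sigmoid_bounds hΔ
  have hΔeq : Δ = RLHF.logit (RLHF.clip L (RLHF.sigmoid Δ)) := by
    rw [aux_clip_eq hs1 hs2, aux_logit_sigmoid]
  calc |RLHF.logit (RLHF.clip L y) - Δ|
      = |RLHF.logit (RLHF.clip L y) - RLHF.logit (RLHF.clip L (RLHF.sigmoid Δ))| := by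
        rw [← hΔeq]
    _ ≤ 2*(1 + Real.exp (2*L)) * |RLHF.clip L y - RLHF.clip L (RLHF.sigmoid Δ)| :=
        aux_logit_lip hL aux_clip_lower (aux_clip_upper hL) aux_clip_lower (aux_clip_upper hL)
    _ ≤ 2*(1 + Real.exp (2*L)) * |y - RLHF.sigmoid Δ| := by
        have := aux_clip_lip (L := L) (x := y) (y := RLHF.sigmoid Δ)
        nlinarith [Real.exp_pos (2*L), abs_nonneg (y - RLHF.sigmoid Δ)]

end Aux
section AuxBinom

open Finset in
lemma aux_bern_sum (m : ℕ) (p : ℝ) :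
    ∑ t ∈ Finset.range (m+1), (m.choose t : ℝ) * p^t * (1-p)^(m-t) = 1 := by
  have h := bernsteinPolynomial.sum ℝ m
  have h2 := congrArg (Polynomial.eval p) h
  simpa [bernsteinPolynomial, Polynomial.eval_finset_sum] using h2

open Finset in
lemma aux_bern_var (m : ℕ) (p : ℝ) :
    ∑ t ∈ Finset.range (m+1),
        ((m:ℝ)*p - t)^2 * ((m.choose t : ℝ) * p^t * (1-p)^(m-t)) = m*p*(1-p) := by
  have h := bernsteinPolynomial.variance ℝ m
  have h2 := congrArg (Polynomial.eval p) h
  simpa [bernsteinPolynomial, Polynomial.eval_finset_sum, nsmul_eq_mul, mul_assoc]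
    using h2

end AuxBinom
section AuxBinomInt
open MeasureTheory Finset

variable {Ω : Type*} [MeasurableSpace Ω] {P : Measure Ω} [IsProbabilityMeasure P]
  {Y : Ω → ℕ} {m : ℕ} {p : ℝ}

lemma aux_binom_integral (hY : Measurable Y) (hp0 : 0 ≤ p) (hp1 : p ≤ 1)
    (hb : RLHF.HasBinomialLaw P Y m p) (g : ℕ → ℝ) :
    Integrable (fun ω => g (Y ω)) P ∧
      ∫ ω, g (Y ω) ∂P =
        ∑ t ∈ Finset.range (m+1), g t * ((m.choose t : ℝ) * p^t * (1-p)^(m-t)) := by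
  have hq0 : 0 ≤ 1 - p := by linarith
  have hπ : ∀ t, 0 ≤ (m.choose t : ℝ) * p^t * (1-p)^(m-t) := fun t => by positivity
  have hA : ∀ t : ℕ, MeasurableSet {ω | Y ω = t} := fun t =>
    hY (MeasurableSet.singleton t)
  have hnull : P {ω | m < Y ω} = 0 := by
    have hsub : {ω | m < Y ω} ⊆ ⋃ t : ℕ, {ω | Y ω = m + 1 + t} := by
      intro ω hω
      have hω' : m < Y ω := hω
      exact Set.mem_iUnion.2 ⟨Y ω - (m+1), by simp only [Set.mem_setOf_eq]; omega⟩
    refine le_antisymm (le_trans (measure_mono hsub) ?_) zero_le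
    rw [measure_iUnion_null fun t => ?_]
    rw [hb (m+1+t), Nat.choose_eq_zero_of_lt (by omega)]
    simp
  have hae : ∀ᵐ ω ∂P, Y ω ≤ m := by
    rw [ae_iff]
    simpa [not_le] using hnull
  have heq : (fun ω => g (Y ω)) =ᵐ[P]
      fun ω => ∑ t ∈ Finset.range (m+1),
        Set.indicator {ω' | Y ω' = t} (fun _ => g t) ω := by
    filter_upwards [hae] with ω hω
    simp only [Set.indicator_apply, Set.mem_setOf_eq]
    rw [Finset.sum_ite_eq (Finset.range (m+1)) (Y ω) (fun t => g t),
      if_pos (Finset.mem_range.2 (by omega))]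
  have hIind : ∀ t, Integrable
      (fun ω => Set.indicator {ω' | Y ω' = t} (fun _ => g t) ω) P :=
    fun t => (integrable_const (g t)).indicator (hA t)
  have hI2 : Integrable (fun ω => ∑ t ∈ Finset.range (m+1),
      Set.indicator {ω' | Y ω' = t} (fun _ => g t) ω) P :=
    integrable_finset_sum _ fun t _ => hIind t
  refine ⟨hI2.congr heq.symm, ?_⟩
  rw [integral_congr_ae heq, integral_finset_sum _ fun t _ => hIind t]
  refine Finset.sum_congr rfl fun t _ => ?_
  rw [integral_indicator_const _ (hA t), measureReal_def, hb t, smul_eq_mul,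
    ENNReal.toReal_ofReal (hπ t), mul_comm]
end AuxBinomInt
section AuxBinomL1
open MeasureTheory Finset

variable {Ω : Type*} [MeasurableSpace Ω] {P : Measure Ω} [IsProbabilityMeasure P]
  {Y : Ω → ℕ} {m : ℕ} {p : ℝ}

lemma aux_binom_L1 (hY : Measurable Y) (hp0 : 0 ≤ p) (hp1 : p ≤ 1) (hm : 1 ≤ m)
    (hb : RLHF.HasBinomialLaw P Y m p) :
    Integrable (fun ω => |(Y ω : ℝ)/m - p|) P ∧
      ∫ ω, |(Y ω : ℝ)/m - p| ∂P ≤ 1/(2*Real.sqrt m) := by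
  have hm0 : (0:ℝ) < m := by exact_mod_cast hm
  have hsq : (0:ℝ) < Real.sqrt m := Real.sqrt_pos.2 hm0
  set s : ℝ := 1/(2*Real.sqrt m) with hs_def
  have hs : 0 < s := by positivity
  obtain ⟨hI, hval⟩ := aux_binom_integral hY hp0 hp1 hb (fun t => |(t:ℝ)/m - p|)
  refine ⟨hI, ?_⟩
  rw [hval]
  set pib : ℕ → ℝ := fun t => (m.choose t : ℝ) * p^t * (1-p)^(m-t) with hpib_def
  have hpib : ∀ t, 0 ≤ pib t := fun t => by
    have : (0:ℝ) ≤ 1 - p := by linarith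
    positivity
  have hvar : ∑ t ∈ Finset.range (m+1), ((t:ℝ)/m - p)^2 * pib t = p*(1-p)/m := by
    have h1 : ∀ t : ℕ, ((t:ℝ)/m - p)^2 * pib t = (((m:ℝ)*p - t)^2 * pib t) / m^2 := by
      intro t
      have : ((t:ℝ)/m - p)^2 = ((m:ℝ)*p - t)^2 / m^2 := by
        field_simp
        ring
      rw [this, div_mul_eq_mul_div]
    rw [Finset.sum_congr rfl fun t _ => h1 t, ← Finset.sum_div, aux_bern_var m p]
    field_simp
  calc ∑ t ∈ Finset.range (m+1), |(t:ℝ)/m - p| * pib t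
      ≤ ∑ t ∈ Finset.range (m+1), (((t:ℝ)/m - p)^2/(2*s) + s/2) * pib t := by
        refine Finset.sum_le_sum fun t _ => mul_le_mul_of_nonneg_right ?_ (hpib t)
        exact aux_amgm s _ hs
    _ = (∑ t ∈ Finset.range (m+1), ((t:ℝ)/m - p)^2 * pib t)/(2*s)
        + s/2 * ∑ t ∈ Finset.range (m+1), pib t := by
        rw [Finset.sum_congr rfl fun t _ => add_mul _ _ (pib t), Finset.sum_add_distrib]
        congr 1
        · rw [Finset.sum_congr rfl fun t _ => div_mul_eq_mul_div _ _ (pib t), ← Finset.sum_div]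
        · rw [← Finset.mul_sum]
    _ ≤ s := by
        rw [hvar, aux_bern_sum m p, mul_one]
        have hpq : p*(1-p) ≤ 1/4 := by nlinarith [sq_nonneg (p - 1/2)]
        have hs2 : s^2 = 1/(4*m) := by
          rw [hs_def]
          rw [div_pow, mul_pow, Real.sq_sqrt hm0.le]
          norm_num
        have h3 : p*(1-p)/m ≤ s^2 := by
          rw [hs2, div_le_div_iff₀ hm0 (by positivity)]
          nlinarith
        have h4 : p*(1-p)/m/(2*s) ≤ s^2/(2*s) := by gcongr
        have h5 : s^2/(2*s) = s/2 := by
          field_simp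
        linarith
end AuxBinomL1
section AuxGauss
open MeasureTheory ProbabilityTheory Real Filter
open scoped NNReal ENNReal

lemma aux_int_Ioi {b : ℝ} (hb : 0 < b) :
    ∫ x in Set.Ioi (0:ℝ), x * Real.exp (-b*x^2) = (2*b)⁻¹ := by
  have hb' : (2*b) ≠ 0 := by positivity
  have A : ∀ x : ℝ, HasDerivAt (fun x => -(2*b)⁻¹ * Real.exp (-b*x^2))
      (x * Real.exp (-b*x^2)) x := by
    intro x
    refine (((hasDerivAt_pow 2 x).const_mul (-b)).exp.const_mul (-(2*b)⁻¹)).congr_deriv ?_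
    field_simp
    ring
  have B : Tendsto (fun y : ℝ => -(2*b)⁻¹ * Real.exp (-b*y^2)) atTop (nhds (-(2*b)⁻¹ * 0)) := by
    refine Tendsto.const_mul _ ?_
    refine Real.tendsto_exp_atBot.comp ?_
    exact (tendsto_pow_atTop two_ne_zero).const_mul_atTop_of_neg (neg_lt_zero.2 hb)
  have := integral_Ioi_of_hasDerivAt_of_tendsto' (a := 0) (fun x _ => A x)
    ((integrable_mul_exp_neg_mul_sq hb).integrableOn (s := Set.Ioi 0)) B
  rw [this]
  norm_num

lemma aux_gauss_abs (V : ℝ≥0) (hV : 0 < (V:ℝ)) :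
    Integrable (fun x => |x|) (gaussianReal 0 V) ∧
      ∫ x, |x| ∂(gaussianReal 0 V) ≤ Real.sqrt V := by
  have hVne : V ≠ 0 := by
    intro h; rw [h] at hV; simp at hV
  have hb : (0:ℝ) < (2*(V:ℝ))⁻¹ := by positivity
  set b : ℝ := (2*(V:ℝ))⁻¹ with hb_def
  set c : ℝ := (Real.sqrt (2*Real.pi*V))⁻¹ with hc_def
  have hc : 0 < c := by positivity
  have hpdf : ∀ x : ℝ, gaussianPDFReal 0 V x = c * Real.exp (-b*x^2) := by
    intro x
    rw [gaussianPDFReal, hc_def, hb_def]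
    congr 1
    rw [sub_zero]
    congr 1
    field_simp
  have hmap : gaussianReal 0 V = volume.withDensity
      (fun x => ((Real.toNNReal (gaussianPDFReal 0 V x)) : ℝ≥0∞)) := by
    rw [gaussianReal_of_var_ne_zero _ hVne]
    rfl
  have hfmeas : Measurable fun x => Real.toNNReal (gaussianPDFReal 0 V x) :=
    (measurable_gaussianPDFReal 0 V).real_toNNReal
  have hsmul : ∀ x : ℝ, (Real.toNNReal (gaussianPDFReal 0 V x)) • |x|
      = c * (|x| * Real.exp (-b*|x|^2)) := by
    intro x
    rw [NNReal.smul_def, smul_eq_mul, Real.coe_toNNReal _ (gaussianPDFReal_nonneg 0 V x),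
      hpdf x, sq_abs]
    ring
  have hIvol : Integrable (fun x : ℝ => c * (|x| * Real.exp (-b*|x|^2))) volume := by
    have h1 : Integrable (fun x : ℝ => |x * Real.exp (-b*x^2)|) volume :=
      (integrable_mul_exp_neg_mul_sq hb).abs
    have h2 : (fun x : ℝ => c * (|x| * Real.exp (-b*|x|^2)))
        = fun x : ℝ => c * |x * Real.exp (-b*x^2)| := by
      funext x
      rw [abs_mul, abs_of_nonneg (Real.exp_pos _).le, sq_abs]
    rw [h2]
    exact h1.const_mul c
  constructor
  · rw [hmap]
    rw [integrable_withDensity_iff_integrable_smul hfmeas]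
    exact hIvol.congr (Filter.Eventually.of_forall fun x => (hsmul x).symm)
  · rw [hmap, integral_withDensity_eq_integral_smul hfmeas]
    have h3 : ∫ x : ℝ, (Real.toNNReal (gaussianPDFReal 0 V x)) • |x|
        = ∫ x : ℝ, c * (|x| * Real.exp (-b*|x|^2)) := by
      exact integral_congr_ae (Filter.Eventually.of_forall hsmul)
    rw [h3]
    have h4 : ∫ x : ℝ, c * (|x| * Real.exp (-b*|x|^2))
        = c * ∫ x : ℝ, |x| * Real.exp (-b*|x|^2) := integral_const_mul c _
    have h5 : ∫ x : ℝ, |x| * Real.exp (-b*|x|^2)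
        = 2 * ∫ x in Set.Ioi (0:ℝ), x * Real.exp (-b*x^2) := by
      exact integral_comp_abs (f := fun y => y * Real.exp (-b*y^2))
    rw [h4, h5, aux_int_Ioi hb]
    have h6 : (2*b)⁻¹ = (V:ℝ) := by
      rw [hb_def]
      field_simp
    rw [h6]
    -- c * (2 * V) ≤ sqrt V  where c = (sqrt (2πV))⁻¹
    have hsqrtV : 0 < Real.sqrt V := Real.sqrt_pos.2 hV
    have h2pi : Real.sqrt (2*Real.pi*(V:ℝ)) = Real.sqrt (2*Real.pi) * Real.sqrt V := by
      rw [← Real.sqrt_mul (by positivity)]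
    have h4' : Real.sqrt 4 = 2 := by
      rw [show (4:ℝ) = 2^2 by norm_num]
      exact Real.sqrt_sq (by norm_num)
    have hpi2 : (2:ℝ) ≤ Real.sqrt (2*Real.pi) := by
      rw [← h4']
      exact Real.sqrt_le_sqrt (by nlinarith [Real.pi_gt_three])
    have hVV : Real.sqrt V * Real.sqrt V = (V:ℝ) := Real.mul_self_sqrt hV.le
    rw [hc_def, h2pi, inv_mul_eq_div, div_le_iff₀ (by positivity)]
    nlinarith

lemma aux_xi_L1 {Ω : Type*} [MeasurableSpace Ω] (P : Measure Ω) [IsProbabilityMeasure P]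
    {ξ : Ω → ℝ} (hξ : Measurable ξ) {V : ℝ≥0} (hV : 0 < (V:ℝ))
    (hmap : P.map ξ = gaussianReal 0 V) :
    Integrable (fun ω => |ξ ω|) P ∧ ∫ ω, |ξ ω| ∂P ≤ Real.sqrt V := by
  obtain ⟨hI, hval⟩ := aux_gauss_abs V hV
  have hasm : AEStronglyMeasurable (fun x : ℝ => |x|) (P.map ξ) :=
    (measurable_abs).aestronglyMeasurable
  constructor
  · have := (integrable_map_measure hasm hξ.aemeasurable).mp (by rwa [hmap])
    exact this
  · have h1 : ∫ ω, |ξ ω| ∂P = ∫ x, |x| ∂(P.map ξ) :=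
      (integral_map hξ.aemeasurable hasm).symm
    rw [h1, hmap]
    exact hval
end AuxGauss
/-- **Proposition H (Worst-case upper bound for DP-RL-LOW).**
There is a constant `C > 0` depending only on `L` such that for every consistent
instance `v`, privacy parameters `ε, δ ∈ (0,1)`, and every `n ≥ 1` with
`n·N_{k,i,j} ∈ ℕ`, the expected simple regret of DP-RL-LOW satisfies
`E[R_n] ≤ C·(n^{−1/2}·Σ ρ_k(√γ_{k,i} + γ̃_{k,i})
  + (√(log(1.25/δ))/(εn))·Σ ρ_k(√γ^DP_{k,i} + γ̃^DP_{k,i}))`. -/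
theorem dp_rl_low_worst_case_upper_bound (L : ℝ) (hL : 0 < L) :
    ∃ C : ℝ, 0 < C ∧
      ∀ (S A d : ℕ), 2 ≤ A →
      ∀ v : Inst S A d, (∀ k i, |v.r k i| ≤ L) → v.Consistent →
      ∀ istar : Fin S → Fin A, v.BestAction istar →
      ∀ w : Fin S → Fin A → Fin A → Fin S → Fin A → Fin A → ℝ,
        (∀ k i j, i ≠ j → v.IsLOW k i j (w k i j)) →
      ∀ ε δ : ℝ, ε ∈ Set.Ioo (0 : ℝ) 1 → δ ∈ Set.Ioo (0 : ℝ) 1 →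
      ∀ n : ℕ, 1 ≤ n →
        (∀ k i j, ∃ m : ℕ, (m : ℝ) = n * v.N k i j) →
        ∀ (Ω : Type) [MeasurableSpace Ω] (P : MeasureTheory.Measure Ω),
          MeasureTheory.IsProbabilityMeasure P →
        ∀ (Y : Fin S → Fin A → Fin A → Ω → ℕ) (ξ : Fin S → Fin A → Fin A → Ω → ℝ),
          IsDPSample v n ε δ P Y ξ →
        ∀ ihat : Ω → Fin S → Fin A,
          (∀ k a, MeasurableSet {ω | ihat ω k = a}) →
          (∀ ω k j, j ≠ ihat ω k →
            0 ≤ v.rtilde L n w (fun k' i' j' => Y k' i' j' ω)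
              (fun k' i' j' => ξ k' i' j' ω) k (ihat ω k) j) →
          ∫ ω, v.regret istar (ihat ω) ∂P ≤
            C * ((1 / Real.sqrt n) *
                (∑ k, ∑ i, if i ≠ istar k then
                  v.ρ k * (Real.sqrt (v.cost (w k i (istar k))) +
                    v.gammaTilde (w k i (istar k))) else 0) +
              (Real.sqrt (Real.log (1.25 / δ)) / (ε * n)) *
                (∑ k, ∑ i, if i ≠ istar k then
                  v.ρ k * (Real.sqrt (v.gammaDP (w k i (istar k))) +
                    v.gammaTildeDP (w k i (istar k))) else 0)) := by
  refine ⟨4*(1 + Real.exp (2*L)), by positivity, ?_⟩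
  intro S A d hA v hr hcons istar hbest w hw ε δ hε hδ n hn hnat Ω mΩ P hP Y ξ hDP ihat hihat hpos
  haveI := hP
  obtain ⟨hYm, hξm, hbin, hgauss, -⟩ := hDP
  have hL0 : (0:ℝ) ≤ L := hL.le
  set cL : ℝ := 2*(1 + Real.exp (2*L)) with hcL_def
  have hcL : 0 < cL := by positivity
  have hn0 : (0:ℝ) < n := by exact_mod_cast hn
  have hε0 : 0 < ε := hε.1
  have hδ0 : 0 < δ := hδ.1
  have hlog : 0 < Real.log (1.25/δ) := Real.log_pos (by rw [lt_div_iff₀ hδ0]; linarith [hδ.2])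
  set a : ℝ := 1/Real.sqrt n with ha_def
  set bq : ℝ := Real.sqrt (Real.log (1.25/δ))/(ε*n) with hbq_def
  have ha0 : 0 ≤ a := by positivity
  have hb0 : 0 ≤ bq := by positivity
  have hsqrt2 : Real.sqrt 2 ≤ 2 := by
    nlinarith [Real.sq_sqrt (by norm_num : (0:ℝ) ≤ 2), Real.sqrt_nonneg 2]
  set E : Fin S → Fin A → Fin A → Ω → ℝ := fun k' i' j' ω =>
    |RLHF.logit (RLHF.clip L (if 0 < v.N k' i' j' then
        (Y k' i' j' ω : ℝ)/(n * v.N k' i' j') + ξ k' i' j' ω else 0))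
      - (v.r k' i' - v.r k' j')| with hE_def
  have hEnn : ∀ k' i' j' ω, 0 ≤ E k' i' j' ω := fun _ _ _ _ => abs_nonneg _
  have hrb : ∀ (k' : Fin S) (i' j' : Fin A), |v.r k' i' - v.r k' j'| ≤ 2*L := by
    intro k' i' j'
    have h1 := hr k' i'
    have h2 := hr k' j'
    calc |v.r k' i' - v.r k' j'| ≤ |v.r k' i'| + |v.r k' j'| := abs_sub _ _
      _ ≤ 2*L := by linarith
  -- per-triple integrability and integral bound
  have hkey : ∀ k' i' j', Integrable (E k' i' j') P ∧ (0 < v.N k' i' j' →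
      ∫ ω, E k' i' j' ω ∂P ≤
        cL * (a * (1/(2*Real.sqrt (v.N k' i' j'))) + bq * (Real.sqrt 2/(v.N k' i' j')))) := by
    intro k' i' j'
    by_cases hN : 0 < v.N k' i' j'
    · obtain ⟨m, hm⟩ := hnat k' i' j'
      have hNpos : (0:ℝ) < v.N k' i' j' := hN
      have hmpos : (0:ℝ) < m := by rw [hm]; positivity
      have hm1 : 1 ≤ m := by
        have : 0 < m := by exact_mod_cast hmpos
        omega
      have hp0 : 0 ≤ RLHF.sigmoid (v.r k' i' - v.r k' j') := aux_sigmoid_pos.le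
      have hp1 : RLHF.sigmoid (v.r k' i' - v.r k' j') ≤ 1 := aux_sigmoid_lt_one.le
      have hbm : RLHF.HasBinomialLaw P (Y k' i' j') m
          (RLHF.sigmoid (v.r k' i' - v.r k' j')) := by
        have := hbin k' i' j' hN
        rwa [← hm, Nat.ceil_natCast] at this
      obtain ⟨hI1, hv1⟩ := aux_binom_L1 (hYm k' i' j') hp0 hp1 hm1 hbm
      have hVpos0 : 0 < 2 * Real.log (1.25/δ) / (ε * n * v.N k' i' j')^2 := by positivity
      have hVcoe : ((Real.toNNReal (2 * Real.log (1.25/δ) / (ε * ↑n * v.N k' i' j')^2)) : ℝ)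
          = 2 * Real.log (1.25/δ) / (ε * n * v.N k' i' j')^2 :=
        Real.coe_toNNReal _ hVpos0.le
      have hVpos : 0 < ((Real.toNNReal (2 * Real.log (1.25/δ) / (ε * ↑n * v.N k' i' j')^2)) : ℝ) := by
        rw [hVcoe]; exact hVpos0
      obtain ⟨hI2, hv2⟩ := aux_xi_L1 P (hξm k' i' j') hVpos (hgauss k' i' j' hN)
      have hEeq : E k' i' j' = fun ω =>
          |RLHF.logit (RLHF.clip L ((Y k' i' j' ω : ℝ)/(n * v.N k' i' j') + ξ k' i' j' ω))
            - (v.r k' i' - v.r k' j')| := by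
        simp only [hE_def, if_pos hN]
      have hpt : ∀ ω, E k' i' j' ω ≤
          cL * (|(Y k' i' j' ω : ℝ)/m - RLHF.sigmoid (v.r k' i' - v.r k' j')|
            + |ξ k' i' j' ω|) := by
        intro ω
        simp only [hE_def, if_pos hN]
        have h1 : |RLHF.logit (RLHF.clip L ((Y k' i' j' ω : ℝ)/(n * v.N k' i' j') + ξ k' i' j' ω))
            - (v.r k' i' - v.r k' j')| ≤
            cL * |(Y k' i' j' ω : ℝ)/(n * v.N k' i' j') + ξ k' i' j' ω
              - RLHF.sigmoid (v.r k' i' - v.r k' j')| := by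
          rw [hcL_def]
          exact aux_key hL0 (hrb k' i' j') _
        have h2 : (Y k' i' j' ω : ℝ)/(n * v.N k' i' j') = (Y k' i' j' ω : ℝ)/m := by
          rw [hm]
        have h3 : |(Y k' i' j' ω : ℝ)/m + ξ k' i' j' ω
            - RLHF.sigmoid (v.r k' i' - v.r k' j')| ≤
            |(Y k' i' j' ω : ℝ)/m - RLHF.sigmoid (v.r k' i' - v.r k' j')| + |ξ k' i' j' ω| := by
          have := abs_add_le ((Y k' i' j' ω : ℝ)/m - RLHF.sigmoid (v.r k' i' - v.r k' j'))
            (ξ k' i' j' ω)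
          have heq : (Y k' i' j' ω : ℝ)/m + ξ k' i' j' ω
              - RLHF.sigmoid (v.r k' i' - v.r k' j')
              = ((Y k' i' j' ω : ℝ)/m - RLHF.sigmoid (v.r k' i' - v.r k' j')) + ξ k' i' j' ω := by
            ring
          rwa [heq]
        refine h1.trans (mul_le_mul_of_nonneg_left ?_ hcL.le)
        rw [h2]
        exact h3
      have hmeasE : AEStronglyMeasurable (E k' i' j') P := by
        have m1 : Measurable fun ω => (Y k' i' j' ω : ℝ) :=
          measurable_from_top.comp (hYm k' i' j')
        have m2 : Measurable fun ω =>
            (Y k' i' j' ω : ℝ)/(n * v.N k' i' j') + ξ k' i' j' ω :=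
          (m1.div_const _).add (hξm k' i' j')
        have mclip : Measurable (RLHF.clip L) :=
          (continuous_const.max (continuous_const.min continuous_id)).measurable
        have mlogit : Measurable RLHF.logit :=
          Real.measurable_log.comp (measurable_id.div (measurable_const.sub measurable_id))
        rw [hEeq]
        exact (((mlogit.comp (mclip.comp m2)).sub measurable_const).abs).aestronglyMeasurable
      have hIbound : Integrable (fun ω =>
          cL * (|(Y k' i' j' ω : ℝ)/m - RLHF.sigmoid (v.r k' i' - v.r k' j')|
            + |ξ k' i' j' ω|)) P := (hI1.add hI2).const_mul cL
      have hIE : Integrable (E k' i' j') P := by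
        refine hIbound.mono' hmeasE (Filter.Eventually.of_forall fun ω => ?_)
        rw [Real.norm_eq_abs, abs_of_nonneg (hEnn k' i' j' ω)]
        exact hpt ω
      refine ⟨hIE, fun _ => ?_⟩
      have hstep1 : ∫ ω, E k' i' j' ω ∂P ≤ ∫ ω,
          cL * (|(Y k' i' j' ω : ℝ)/m - RLHF.sigmoid (v.r k' i' - v.r k' j')|
            + |ξ k' i' j' ω|) ∂P :=
        integral_mono_of_nonneg (Filter.Eventually.of_forall fun ω => hEnn k' i' j' ω)
          hIbound (Filter.Eventually.of_forall hpt)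
      have hstep2 : ∫ ω, cL * (|(Y k' i' j' ω : ℝ)/m
            - RLHF.sigmoid (v.r k' i' - v.r k' j')| + |ξ k' i' j' ω|) ∂P
          = cL * ((∫ ω, |(Y k' i' j' ω : ℝ)/m
              - RLHF.sigmoid (v.r k' i' - v.r k' j')| ∂P) + ∫ ω, |ξ k' i' j' ω| ∂P) := by
        rw [integral_const_mul, integral_add hI1 hI2]
      have hstep3 : (∫ ω, |(Y k' i' j' ω : ℝ)/m
            - RLHF.sigmoid (v.r k' i' - v.r k' j')| ∂P) + ∫ ω, |ξ k' i' j' ω| ∂P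
          ≤ 1/(2*Real.sqrt m)
            + Real.sqrt ((Real.toNNReal (2 * Real.log (1.25/δ) / (ε * ↑n * v.N k' i' j')^2)) : ℝ) :=
        add_le_add hv1 hv2
      have hsqm : Real.sqrt m = Real.sqrt n * Real.sqrt (v.N k' i' j') := by
        rw [hm, Real.sqrt_mul hn0.le]
      have hsqV : Real.sqrt ((Real.toNNReal
            (2 * Real.log (1.25/δ) / (ε * ↑n * v.N k' i' j')^2)) : ℝ)
          = Real.sqrt 2 * Real.sqrt (Real.log (1.25/δ)) / (ε * n * v.N k' i' j') := by
        rw [hVcoe]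
        rw [show 2 * Real.log (1.25/δ) / (ε * ↑n * v.N k' i' j')^2
            = (Real.sqrt (2 * Real.log (1.25/δ)) / (ε * ↑n * v.N k' i' j'))^2 by
          rw [div_pow, Real.sq_sqrt (by positivity)]]
        rw [Real.sqrt_sq (by positivity), Real.sqrt_mul (by norm_num)]
      have hfin : 1/(2*Real.sqrt m)
            + Real.sqrt ((Real.toNNReal (2 * Real.log (1.25/δ) / (ε * ↑n * v.N k' i' j')^2)) : ℝ)
          = a * (1/(2*Real.sqrt (v.N k' i' j'))) + bq * (Real.sqrt 2/(v.N k' i' j')) := by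
        rw [hsqm, hsqV, ha_def, hbq_def]
        have hsn : (0:ℝ) < Real.sqrt n := Real.sqrt_pos.2 hn0
        have hsN : (0:ℝ) < Real.sqrt (v.N k' i' j') := Real.sqrt_pos.2 hNpos
        field_simp
      calc ∫ ω, E k' i' j' ω ∂P ≤ _ := hstep1
        _ = _ := hstep2
        _ ≤ cL * (1/(2*Real.sqrt m)
            + Real.sqrt ((Real.toNNReal
              (2 * Real.log (1.25/δ) / (ε * ↑n * v.N k' i' j')^2)) : ℝ)) :=
          mul_le_mul_of_nonneg_left hstep3 hcL.le
        _ = _ := by rw [hfin]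
    · constructor
      · have : E k' i' j' = fun _ =>
            |RLHF.logit (RLHF.clip L 0) - (v.r k' i' - v.r k' j')| := by
          simp only [hE_def, if_neg hN]
        rw [this]
        exact integrable_const _
      · exact fun h => absurd h hN
  -- the dominating function G
  set G : Ω → ℝ := fun ω => ∑ k, ∑ i, (if i ≠ istar k then v.ρ k else 0) *
      (∑ k', ∑ i', ∑ j', |w k i (istar k) k' i' j'| * E k' i' j' ω) with hG_def
  have hIinner : ∀ k i, Integrable (fun ω =>
      ∑ k', ∑ i', ∑ j', |w k i (istar k) k' i' j'| * E k' i' j' ω) P := by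
    intro k i
    exact integrable_finset_sum _ fun k' _ => integrable_finset_sum _ fun i' _ =>
      integrable_finset_sum _ fun j' _ => ((hkey k' i' j').1.const_mul _)
  have hGint : Integrable G P := by
    rw [hG_def]
    exact integrable_finset_sum _ fun k _ => integrable_finset_sum _ fun i _ =>
      ((hIinner k i).const_mul _)
  have hinnernn : ∀ k i ω, 0 ≤ ∑ k', ∑ i', ∑ j',
      |w k i (istar k) k' i' j'| * E k' i' j' ω := by
    intro k i ω
    refine Finset.sum_nonneg fun k' _ => Finset.sum_nonneg fun i' _ =>
      Finset.sum_nonneg fun j' _ => mul_nonneg (abs_nonneg _) (hEnn k' i' j' ω)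
  have hitenn : ∀ k i, 0 ≤ (if i ≠ istar k then v.ρ k else 0) := by
    intro k i
    split
    · exact (v.ρ_pos k).le
    · exact le_refl 0
  have hregnn : ∀ ω, 0 ≤ v.regret istar (ihat ω) := by
    intro ω
    refine Finset.sum_nonneg fun k _ => mul_nonneg (v.ρ_pos k).le ?_
    by_cases hik : ihat ω k = istar k
    · rw [hik, sub_self]
    · exact sub_nonneg.2 (hbest k (ihat ω k) hik).le
  have hptG : ∀ ω, v.regret istar (ihat ω) ≤ G ω := by
    intro ω
    simp only [hG_def, RLHF.Inst.regret]
    refine Finset.sum_le_sum fun k _ => ?_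
    by_cases hik : ihat ω k = istar k
    · rw [hik, sub_self, mul_zero]
      exact Finset.sum_nonneg fun i _ => mul_nonneg (hitenn k i) (hinnernn k i ω)
    · have hsingle : (if ihat ω k ≠ istar k then v.ρ k else 0) *
          (∑ k', ∑ i', ∑ j', |w k (ihat ω k) (istar k) k' i' j'| * E k' i' j' ω)
          ≤ ∑ i, (if i ≠ istar k then v.ρ k else 0) *
            (∑ k', ∑ i', ∑ j', |w k i (istar k) k' i' j'| * E k' i' j' ω) :=
        Finset.single_le_sum (f := fun i => (if i ≠ istar k then v.ρ k else 0) *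
            (∑ k', ∑ i', ∑ j', |w k i (istar k) k' i' j'| * E k' i' j' ω))
          (fun i _ => mul_nonneg (hitenn k i) (hinnernn k i ω)) (Finset.mem_univ (ihat ω k))
      refine le_trans ?_ hsingle
      rw [if_pos hik]
      refine mul_le_mul_of_nonneg_left ?_ (v.ρ_pos k).le
      -- core inequality
      obtain ⟨hz, hrep⟩ := (hw k (ihat ω k) (istar k) hik).1
      have hsum : v.r k (ihat ω k) - v.r k (istar k)
          = ∑ k', ∑ i', ∑ j', w k (ihat ω k) (istar k) k' i' j' * (v.r k' i' - v.r k' j') := by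
        have h0 := congrArg (fun x : EuclideanSpace ℝ (Fin d) => @inner ℝ _ _ x v.θ) hrep
        simp only [inner_sub_left, sum_inner, real_inner_smul_left] at h0
        simpa [RLHF.Inst.r, inner_sub_left] using h0
      have h0 := hpos ω k (istar k) (Ne.symm hik)
      simp only [RLHF.Inst.rtilde, if_neg hik] at h0
      have hter : ∀ (k' : Fin S) (i' j' : Fin A),
          w k (ihat ω k) (istar k) k' i' j' *
            RLHF.logit (RLHF.clip L (if 0 < v.N k' i' j' then
              (Y k' i' j' ω : ℝ)/(n * v.N k' i' j') + ξ k' i' j' ω else 0))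
          - w k (ihat ω k) (istar k) k' i' j' * (v.r k' i' - v.r k' j')
          ≤ |w k (ihat ω k) (istar k) k' i' j'| * E k' i' j' ω := by
        intro k' i' j'
        simp only [hE_def]
        rw [← abs_mul, ← mul_sub]
        exact le_abs_self _
      calc v.r k (istar k) - v.r k (ihat ω k)
          ≤ (∑ k', ∑ i', ∑ j', w k (ihat ω k) (istar k) k' i' j' *
              RLHF.logit (RLHF.clip L (if 0 < v.N k' i' j' then
                (Y k' i' j' ω : ℝ)/(n * v.N k' i' j') + ξ k' i' j' ω else 0)))
            - (v.r k (ihat ω k) - v.r k (istar k)) := by linarith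
        _ = ∑ k', ∑ i', ∑ j', (w k (ihat ω k) (istar k) k' i' j' *
              RLHF.logit (RLHF.clip L (if 0 < v.N k' i' j' then
                (Y k' i' j' ω : ℝ)/(n * v.N k' i' j') + ξ k' i' j' ω else 0))
            - w k (ihat ω k) (istar k) k' i' j' * (v.r k' i' - v.r k' j')) := by
          rw [hsum]
          simp only [← Finset.sum_sub_distrib]
        _ ≤ _ := Finset.sum_le_sum fun k' _ => Finset.sum_le_sum fun i' _ =>
            Finset.sum_le_sum fun j' _ => hter k' i' j'
  have hGval : ∫ ω, G ω ∂P = ∑ k, ∑ i, (if i ≠ istar k then v.ρ k else 0) *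
      (∑ k', ∑ i', ∑ j', |w k i (istar k) k' i' j'| * ∫ ω, E k' i' j' ω ∂P) := by
    rw [hG_def]
    rw [integral_finset_sum _ (fun k _ => integrable_finset_sum _ fun i _ =>
      (hIinner k i).const_mul _)]
    refine Finset.sum_congr rfl fun k _ => ?_
    rw [integral_finset_sum _ (fun i _ => (hIinner k i).const_mul _)]
    refine Finset.sum_congr rfl fun i _ => ?_
    rw [integral_const_mul]
    congr 1
    rw [integral_finset_sum _ (fun k' _ => integrable_finset_sum _ fun i' _ =>
      integrable_finset_sum _ fun j' _ => ((hkey k' i' j').1.const_mul _))]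
    refine Finset.sum_congr rfl fun k' _ => ?_
    rw [integral_finset_sum _ (fun i' _ => integrable_finset_sum _ fun j' _ =>
      ((hkey k' i' j').1.const_mul _))]
    refine Finset.sum_congr rfl fun i' _ => ?_
    rw [integral_finset_sum _ (fun j' _ => ((hkey k' i' j').1.const_mul _))]
    refine Finset.sum_congr rfl fun j' _ => ?_
    rw [integral_const_mul]
  -- bound the inner sum of expectations
  have hSval : ∀ k i, i ≠ istar k →
      (∑ k', ∑ i', ∑ j', |w k i (istar k) k' i' j'| * ∫ ω, E k' i' j' ω ∂P)
      ≤ cL * a/2 * v.gammaTilde (w k i (istar k))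
        + cL * Real.sqrt 2 * bq * v.gammaTildeDP (w k i (istar k)) := by
    intro k i hik
    simp only [RLHF.Inst.gammaTilde, RLHF.Inst.gammaTildeDP]
    simp only [Finset.mul_sum]
    rw [← Finset.sum_add_distrib]
    refine Finset.sum_le_sum fun k' _ => ?_
    rw [← Finset.sum_add_distrib]
    refine Finset.sum_le_sum fun i' _ => ?_
    rw [← Finset.sum_add_distrib]
    refine Finset.sum_le_sum fun j' _ => ?_
    by_cases hN : 0 < v.N k' i' j'
    · rw [if_pos hN, if_pos hN]
      have hb := (hkey k' i' j').2 hN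
      calc |w k i (istar k) k' i' j'| * ∫ ω, E k' i' j' ω ∂P
          ≤ |w k i (istar k) k' i' j'| *
            (cL * (a * (1/(2*Real.sqrt (v.N k' i' j'))) + bq * (Real.sqrt 2/(v.N k' i' j')))) :=
          mul_le_mul_of_nonneg_left hb (abs_nonneg _)
        _ = cL * a/2 * (|w k i (istar k) k' i' j'| / Real.sqrt (v.N k' i' j'))
            + cL * Real.sqrt 2 * bq * (|w k i (istar k) k' i' j'| / v.N k' i' j') := by
          ring
    · have hw0 : w k i (istar k) k' i' j' = 0 :=
        (hw k i (istar k) hik).1.1 k' i' j'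
          (le_antisymm (not_lt.1 hN) (v.N_nonneg k' i' j'))
      rw [if_neg hN, if_neg hN, hw0]
      simp
  have hgTnn : ∀ k i, 0 ≤ v.gammaTilde (w k i (istar k)) := by
    intro k i
    simp only [RLHF.Inst.gammaTilde]
    refine Finset.sum_nonneg fun k' _ => Finset.sum_nonneg fun i' _ =>
      Finset.sum_nonneg fun j' _ => ?_
    split
    · positivity
    · exact le_refl 0
  have hgTDPnn : ∀ k i, 0 ≤ v.gammaTildeDP (w k i (istar k)) := by
    intro k i
    simp only [RLHF.Inst.gammaTildeDP]
    refine Finset.sum_nonneg fun k' _ => Finset.sum_nonneg fun i' _ =>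
      Finset.sum_nonneg fun j' _ => ?_
    split
    · positivity
    · exact le_refl 0
  calc ∫ ω, v.regret istar (ihat ω) ∂P
      ≤ ∫ ω, G ω ∂P := integral_mono_of_nonneg (Filter.Eventually.of_forall hregnn)
        hGint (Filter.Eventually.of_forall hptG)
    _ = _ := hGval
    _ ≤ ∑ k, ∑ i, (if i ≠ istar k then v.ρ k else 0) *
        (cL * a/2 * v.gammaTilde (w k i (istar k))
          + cL * Real.sqrt 2 * bq * v.gammaTildeDP (w k i (istar k))) := by
        refine Finset.sum_le_sum fun k _ => Finset.sum_le_sum fun i _ => ?_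
        by_cases hik : i ≠ istar k
        · exact mul_le_mul_of_nonneg_left (hSval k i hik) (hitenn k i)
        · rw [if_neg hik, zero_mul, zero_mul]
    _ ≤ 4*(1 + Real.exp (2*L)) *
        (a * (∑ k, ∑ i, if i ≠ istar k then
            v.ρ k * (Real.sqrt (v.cost (w k i (istar k))) + v.gammaTilde (w k i (istar k)))
          else 0) +
         bq * (∑ k, ∑ i, if i ≠ istar k then
            v.ρ k * (Real.sqrt (v.gammaDP (w k i (istar k)))
              + v.gammaTildeDP (w k i (istar k))) else 0)) := by
        rw [mul_add, ← mul_assoc, ← mul_assoc, Finset.mul_sum, Finset.mul_sum,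
          ← Finset.sum_add_distrib]
        refine Finset.sum_le_sum fun k _ => ?_
        rw [Finset.mul_sum, Finset.mul_sum, ← Finset.sum_add_distrib]
        refine Finset.sum_le_sum fun i _ => ?_
        by_cases hik : i ≠ istar k
        · rw [if_pos hik, if_pos hik, if_pos hik]
          have hρ := (v.ρ_pos k).le
          have hgT := hgTnn k i
          have hgTDP := hgTDPnn k i
          have hsc := Real.sqrt_nonneg (v.cost (w k i (istar k)))
          have hsg := Real.sqrt_nonneg (v.gammaDP (w k i (istar k)))
          have hu : (0:ℝ) ≤ 1 + Real.exp (2*L) := by positivity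
          rw [hcL_def]
          nlinarith [mul_nonneg (mul_nonneg (mul_nonneg hu ha0) hρ) hgT,
            mul_nonneg (mul_nonneg (mul_nonneg hu ha0) hρ) hsc,
            mul_nonneg (mul_nonneg (mul_nonneg hu hb0) hρ) hsg,
            mul_nonneg (mul_nonneg (mul_nonneg hu hb0) hρ) hgTDP,
            hsqrt2, mul_nonneg hu (mul_nonneg (mul_nonneg hb0 hρ) hgTDP)]
        · rw [if_neg hik, if_neg hik, if_neg hik, zero_mul, mul_zero, mul_zero, add_zero]
end

section
/- SubGaussianity of the RL-LOW relative-reward estimate: There exists a constant C > 0 depending only on L (the paper gives C = (6√(2e)·(3√(log 2)+1))²·3/(2(1−β)^4) with β = e^{2L}/(1+e^{2L})) such that for every consistent offline RLHF instance v, every n with n·N_{k,i,j} ∈ ℕ, and every (k,i) ∈ 𝒮 × 𝒜 with i ≠ i*_k, the estimate r̂_{k,i*_k,i} is subGaussian with variance proxy at most C·γ_{k,i}/n; that is, E[exp(t·(r̂_{k,i*_k,i} − E[r̂_{k,i*_k,i}]))] ≤ exp((C·γ_{k,i}/n)·t²/2) for all t ∈ ℝ. -/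
open MeasureTheory ProbabilityTheory Real

open RLHF


open Finset


/-- Crude two-point Hoeffding-type inequality with constant 1 instead of 1/8. -/
lemma two_point_hoeffding (p a b c s : ℝ) (hp0 : 0 ≤ p) (hp1 : p ≤ 1)
    (hab : |a - b| ≤ c) :
    p * exp (s * a) + (1 - p) * exp (s * b) ≤
      exp (s * (p * a + (1 - p) * b) + s ^ 2 * c ^ 2) := by
  have hq0 : 0 ≤ 1 - p := by linarith
  set μ := p * a + (1 - p) * b with hμ
  have hZa : |a - μ| ≤ c := by
    have : a - μ = (1 - p) * (a - b) := by ring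
    rw [this, abs_mul, abs_of_nonneg hq0]
    calc (1 - p) * |a - b| ≤ 1 * |a - b| := by nlinarith [abs_nonneg (a - b)]
      _ ≤ c := by simpa using hab
  have hZb : |b - μ| ≤ c := by
    have : b - μ = p * (b - a) := by ring
    rw [this, abs_mul, abs_of_nonneg hp0, abs_sub_comm]
    calc p * |a - b| ≤ 1 * |a - b| := by nlinarith [abs_nonneg (a - b)]
      _ ≤ c := by simpa using hab
  have hc : 0 ≤ c := le_trans (abs_nonneg _) hab
  have key : p * exp (s * (a - μ)) + (1 - p) * exp (s * (b - μ)) ≤ exp (s ^ 2 * c ^ 2) := by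
    by_cases hsc : |s| * c ≤ 1
    · -- small regime: exp x ≤ 1 + x + x^2 for |x| ≤ 1
      have hbound : ∀ z : ℝ, |z| ≤ c → exp (s * z) ≤ 1 + s * z + s ^ 2 * c ^ 2 := by
        intro z hz
        have h1 : |s * z| ≤ 1 := by
          rw [abs_mul]
          calc |s| * |z| ≤ |s| * c := by nlinarith [abs_nonneg s]
            _ ≤ 1 := hsc
        have := Real.abs_exp_sub_one_sub_id_le h1
        have h2 : exp (s * z) - 1 - s * z ≤ (s * z) ^ 2 := le_trans (le_abs_self _) this
        have hz2 : z ^ 2 ≤ c ^ 2 := by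
          rcases abs_le.mp hz with ⟨h,h'⟩; nlinarith
        have h3 : (s * z) ^ 2 ≤ s ^ 2 * c ^ 2 := by nlinarith [sq_nonneg s]
        linarith
      have h1 := hbound _ hZa
      have h2 := hbound _ hZb
      have hmean : p * (s * (a - μ)) + (1 - p) * (s * (b - μ)) = 0 := by
        simp only [hμ]; ring
      have : p * exp (s * (a - μ)) + (1 - p) * exp (s * (b - μ)) ≤
          1 + s ^ 2 * c ^ 2 := by nlinarith [exp_pos (s * (a-μ)), exp_pos (s * (b-μ))]
      calc p * exp (s * (a - μ)) + (1 - p) * exp (s * (b - μ)) ≤ 1 + s ^ 2 * c ^ 2 := this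
        _ ≤ exp (s ^ 2 * c ^ 2) := by
            have := Real.add_one_le_exp (s ^ 2 * c ^ 2); linarith
    · -- large regime: |s| c > 1, so |s z| ≤ |s| c ≤ (|s| c)^2 = s^2 c^2
      push_neg at hsc
      have hbound : ∀ z : ℝ, |z| ≤ c → exp (s * z) ≤ exp (s ^ 2 * c ^ 2) := by
        intro z hz
        apply exp_le_exp.mpr
        have h1 : s * z ≤ |s| * c := by
          calc s * z ≤ |s * z| := le_abs_self _
            _ = |s| * |z| := abs_mul s z
            _ ≤ |s| * c := by nlinarith [abs_nonneg s]
        have h2 : |s| * c ≤ (|s| * c) ^ 2 := by nlinarith [abs_nonneg s]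
        have h3 : (|s| * c) ^ 2 = s ^ 2 * c ^ 2 := by rw [mul_pow, sq_abs]
        linarith
      have h1 := hbound _ hZa
      have h2 := hbound _ hZb
      nlinarith [exp_pos (s ^ 2 * c ^ 2)]
  have hsum : p * exp (s * a) + (1 - p) * exp (s * b) =
      exp (s * μ) * (p * exp (s * (a - μ)) + (1 - p) * exp (s * (b - μ))) := by
    rw [mul_add]
    rw [show s * (a - μ) = s * a - s * μ by ring, show s * (b - μ) = s * b - s * μ by ring]
    rw [Real.exp_sub, Real.exp_sub]
    field_simp
  rw [hsum, Real.exp_add]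
  exact mul_le_mul_of_nonneg_left key (le_of_lt (exp_pos _))


noncomputable def bpmf (p : ℝ) (m y : ℕ) : ℝ := (m.choose y : ℝ) * p ^ y * (1 - p) ^ (m - y)

lemma bpmf_pascal (p : ℝ) (m : ℕ) (F : ℕ → ℝ) :
    ∑ y ∈ range (m + 2), bpmf p (m + 1) y * F y =
      ∑ z ∈ range (m + 1), bpmf p m z * ((1 - p) * F z + p * F (z + 1)) := by
  rw [Finset.sum_range_succ']
  have h0 : bpmf p (m + 1) 0 * F 0 = (1 - p) * (bpmf p m 0 * F 0) := by
    simp [bpmf, pow_succ]; ring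
  have hstep : ∀ z, bpmf p (m + 1) (z + 1) * F (z + 1) =
      p * (bpmf p m z * F (z + 1)) + (1 - p) * (bpmf p m (z + 1) * F (z + 1)) := by
    intro z
    rcases le_or_gt (z + 1) m with h | h
    · have e1 : m + 1 - (z + 1) = m - z := by omega
      have e2 : m - z = (m - (z + 1)) + 1 := by omega
      simp only [bpmf, Nat.choose_succ_succ, e1]
      push_cast
      rw [e2, pow_succ, pow_succ]
      ring
    · have hz : m.choose (z + 1) = 0 := Nat.choose_eq_zero_of_lt h
      rcases Nat.lt_or_ge z m with h' | h'
      · omega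
      · -- z ≥ m; if z > m then also choose m z = 0 and choose (m+1) (z+1) = 0
        rcases eq_or_lt_of_le h' with rfl | h''
        · -- z = m
          have e1 : m + 1 - (m + 1) = 0 := by omega
          have e2 : m - m = 0 := by omega
          simp only [bpmf, Nat.choose_succ_succ, hz, e1, e2, Nat.choose_self]
          push_cast
          ring
        · have h1 : (m + 1).choose (z + 1) = 0 := Nat.choose_eq_zero_of_lt (by omega)
          have h2 : m.choose z = 0 := Nat.choose_eq_zero_of_lt h''
          simp [bpmf, h1, h2, hz]
  simp only [hstep, h0]
  rw [Finset.sum_add_distrib]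
  have : ∑ z ∈ range (m + 1), (1 - p) * (bpmf p m (z + 1) * F (z + 1)) + (1 - p) * (bpmf p m 0 * F 0)
      = ∑ z ∈ range (m + 2), (1 - p) * (bpmf p m z * F z) :=
    (Finset.sum_range_succ' (fun z => (1 - p) * (bpmf p m z * F z)) (m + 1)).symm
  rw [add_assoc, this]
  have h2 : ∑ z ∈ range (m + 2), (1 - p) * (bpmf p m z * F z)
      = ∑ z ∈ range (m + 1), (1 - p) * (bpmf p m z * F z) := by
    rw [Finset.sum_range_succ]
    simp [bpmf, Nat.choose_eq_zero_of_lt (Nat.lt_succ_self m)]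
  rw [h2, ← Finset.sum_add_distrib]
  congr 1; ext z; ring

lemma bpmf_nonneg {p : ℝ} (hp0 : 0 ≤ p) (hp1 : p ≤ 1) (m y : ℕ) : 0 ≤ bpmf p m y := by
  have h1 : (0:ℝ) ≤ 1 - p := by linarith
  exact mul_nonneg (mul_nonneg (Nat.cast_nonneg _) (pow_nonneg hp0 _)) (pow_nonneg h1 _)

lemma bpmf_sum (p : ℝ) (m : ℕ) : ∑ y ∈ range (m + 1), bpmf p m y = 1 := by
  calc ∑ y ∈ range (m + 1), bpmf p m y
      = ∑ y ∈ range (m + 1), p ^ y * (1 - p) ^ (m - y) * (m.choose y : ℝ) := by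
        apply Finset.sum_congr rfl; intro y _; simp only [bpmf]; ring
    _ = (p + (1 - p)) ^ m := (add_pow p (1 - p) m).symm
    _ = 1 := by norm_num

lemma bpmf_hoeffding (p c s : ℝ) (hp0 : 0 ≤ p) (hp1 : p ≤ 1) :
    ∀ (m : ℕ) (g : ℕ → ℝ), (∀ y, |g (y + 1) - g y| ≤ c) →
    ∑ y ∈ range (m + 1), bpmf p m y * exp (s * g y) ≤
      exp (s * ∑ y ∈ range (m + 1), bpmf p m y * g y + m * (s ^ 2 * c ^ 2)) := by
  intro m
  induction m with
  | zero =>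
    intro g hg
    simp [bpmf]
  | succ m ih =>
    intro g hg
    set h : ℕ → ℝ := fun z => p * g (z + 1) + (1 - p) * g z with hh
    have hhd : ∀ y, |h (y + 1) - h y| ≤ c := by
      intro y
      have e : h (y + 1) - h y = p * (g (y + 2) - g (y + 1)) + (1 - p) * (g (y + 1) - g y) := by
        simp only [hh]; ring
      rw [e]
      calc |p * (g (y + 2) - g (y + 1)) + (1 - p) * (g (y + 1) - g y)|
          ≤ |p * (g (y + 2) - g (y + 1))| + |(1 - p) * (g (y + 1) - g y)| := abs_add_le _ _
        _ = p * |g (y + 2) - g (y + 1)| + (1 - p) * |g (y + 1) - g y| := by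
            rw [abs_mul, abs_mul, abs_of_nonneg hp0, abs_of_nonneg (by linarith : (0:ℝ) ≤ 1 - p)]
        _ ≤ p * c + (1 - p) * c := by
            have h1 := hg (y + 1); have h2 := hg y
            have hc : 0 ≤ c := le_trans (abs_nonneg _) (hg 0)
            nlinarith
        _ = c := by ring
    have step1 : ∑ y ∈ range (m + 2), bpmf p (m + 1) y * exp (s * g y)
        ≤ exp (s ^ 2 * c ^ 2) * ∑ z ∈ range (m + 1), bpmf p m z * exp (s * h z) := by
      rw [bpmf_pascal, Finset.mul_sum]
      apply Finset.sum_le_sum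
      intro z _
      have htp := two_point_hoeffding p (g (z + 1)) (g z) c s hp0 hp1 (hg z)
      have hb := bpmf_nonneg hp0 hp1 m z
      calc bpmf p m z * ((1 - p) * exp (s * g z) + p * exp (s * g (z + 1)))
          = bpmf p m z * (p * exp (s * g (z + 1)) + (1 - p) * exp (s * g z)) := by ring
        _ ≤ bpmf p m z * exp (s * (p * g (z + 1) + (1 - p) * g z) + s ^ 2 * c ^ 2) :=
            mul_le_mul_of_nonneg_left htp hb
        _ = exp (s ^ 2 * c ^ 2) * (bpmf p m z * exp (s * h z)) := by
            rw [Real.exp_add]; simp only [hh]; ring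
    have step2 := ih h hhd
    have hmean : ∑ z ∈ range (m + 1), bpmf p m z * h z
        = ∑ y ∈ range (m + 2), bpmf p (m + 1) y * g y := by
      rw [bpmf_pascal]
      apply Finset.sum_congr rfl
      intro z _
      simp only [hh]; ring
    calc ∑ y ∈ range (m + 2), bpmf p (m + 1) y * exp (s * g y)
        ≤ exp (s ^ 2 * c ^ 2) * ∑ z ∈ range (m + 1), bpmf p m z * exp (s * h z) := step1
      _ ≤ exp (s ^ 2 * c ^ 2) *
          exp (s * ∑ z ∈ range (m + 1), bpmf p m z * h z + m * (s ^ 2 * c ^ 2)) :=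
            mul_le_mul_of_nonneg_left step2 (le_of_lt (exp_pos _))
      _ = exp (s * ∑ y ∈ range (m + 2), bpmf p (m + 1) y * g y + (m + 1 : ℕ) * (s ^ 2 * c ^ 2)) := by
          rw [← Real.exp_add, hmean]; push_cast; ring_nf

lemma integral_binomial {Ω : Type*} [MeasurableSpace Ω] (P : Measure Ω)
    [IsProbabilityMeasure P] (Y : Ω → ℕ) (hY : Measurable Y) (m : ℕ) (p : ℝ)
    (hp0 : 0 ≤ p) (hp1 : p ≤ 1) (hlaw : HasBinomialLaw P Y m p) (f : ℕ → ℝ) :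
    Integrable (fun ω => f (Y ω)) P ∧
      ∫ ω, f (Y ω) ∂P = ∑ y ∈ range (m + 1), bpmf p m y * f y := by
  have hlaw' : ∀ t : ℕ, P {ω | Y ω = t} = ENNReal.ofReal (bpmf p m t) := hlaw
  have htail : P {ω | m < Y ω} = 0 := by
    have hsub : {ω | m < Y ω} ⊆ ⋃ t : ℕ, {ω | Y ω = m + 1 + t} := by
      intro ω hω
      have hω' : m < Y ω := hω
      exact Set.mem_iUnion.mpr ⟨Y ω - (m + 1),
        show Y ω = m + 1 + (Y ω - (m + 1)) by omega⟩
    refine measure_mono_null hsub (measure_iUnion_null fun t => ?_)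
    rw [hlaw' (m + 1 + t)]
    have : m.choose (m + 1 + t) = 0 := Nat.choose_eq_zero_of_lt (by omega)
    simp [bpmf, this]
  set g : Ω → ℝ := fun ω => ∑ y ∈ range (m + 1),
    Set.indicator (Y ⁻¹' {y}) (fun _ => f y) ω with hg
  have hmeas : ∀ y : ℕ, MeasurableSet (Y ⁻¹' {y} : Set Ω) := fun y =>
    hY (MeasurableSet.singleton y)
  have hae : (fun ω => f (Y ω)) =ᵐ[P] g := by
    filter_upwards [MeasureTheory.measure_eq_zero_iff_ae_notMem.mp htail] with ω hω
    have hYm : Y ω ≤ m := by simpa [Set.mem_setOf_eq, not_lt] using hω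
    have hind : ∀ y, (Y ⁻¹' {y}).indicator (fun _ => f y) ω = if y = Y ω then f y else 0 := by
      intro y
      by_cases h : Y ω = y
      · simp [Set.indicator_apply, h]
      · have h2 : ¬(y = Y ω) := fun hh => h hh.symm
        simp [Set.indicator_apply, h, h2]
    simp only [hg, hind]
    rw [Finset.sum_ite_eq' (range (m + 1)) (Y ω) f]
    simp [Nat.lt_succ_iff, hYm]
  have hint_g : Integrable g P := by
    apply integrable_finset_sum
    intro y _
    exact (integrable_const (f y)).indicator (hmeas y)
  constructor
  · exact hint_g.congr hae.symm
  · rw [integral_congr_ae hae, integral_finset_sum _ (fun y _ =>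
      (integrable_const (f y)).indicator (hmeas y))]
    apply Finset.sum_congr rfl
    intro y _
    rw [integral_indicator_const (f y) (hmeas y)]
    have : Y ⁻¹' {y} = {ω | Y ω = y} := rfl
    rw [this, measureReal_def, hlaw' y, ENNReal.toReal_ofReal (bpmf_nonneg hp0 hp1 m y)]
    simp [mul_comm]

lemma log_lip_s18 {α x y : ℝ} (hα : 0 < α) (hx : α ≤ x) (hy : α ≤ y) :
    |Real.log x - Real.log y| ≤ |x - y| / α := by
  wlog h : y ≤ x generalizing x y
  · rw [abs_sub_comm, abs_sub_comm x y]; exact this hy hx (le_of_not_ge h)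
  have hy0 : 0 < y := lt_of_lt_of_le hα hy
  have hx0 : 0 < x := lt_of_lt_of_le hα hx
  have h1 : Real.log x - Real.log y = Real.log (x / y) := (Real.log_div hx0.ne' hy0.ne').symm
  have h2 : Real.log (x / y) ≤ x / y - 1 := Real.log_le_sub_one_of_pos (by positivity)
  have h3 : x / y - 1 = (x - y) / y := by field_simp
  have h4 : (x - y) / y ≤ (x - y) / α := by
    apply div_le_div_of_nonneg_left (by linarith) hα hy
  have h5 : 0 ≤ Real.log x - Real.log y := by
    rw [sub_nonneg]; exact Real.log_le_log hy0 h
  rw [abs_of_nonneg h5, abs_of_nonneg (by linarith : (0:ℝ) ≤ x - y)]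
  calc Real.log x - Real.log y = Real.log (x / y) := h1
    _ ≤ x / y - 1 := h2
    _ = (x - y) / y := h3
    _ ≤ (x - y) / α := h4

lemma logit_clip_lipschitz {L : ℝ} (hL : 0 < L) (u v : ℝ) :
    |logit (clip L u) - logit (clip L v)| ≤ 2 * (1 + Real.exp (2 * L)) * |u - v| := by
  set α := 1 / (1 + Real.exp (2 * L)) with hα
  set β := Real.exp (2 * L) / (1 + Real.exp (2 * L)) with hβ
  have he : (1:ℝ) ≤ Real.exp (2 * L) := by
    rw [show (1:ℝ) = Real.exp 0 by simp]; exact Real.exp_le_exp.mpr (by linarith)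
  have hd : (0:ℝ) < 1 + Real.exp (2 * L) := by positivity
  have hα0 : 0 < α := by rw [hα]; positivity
  have hαβ : α ≤ β := by rw [hα, hβ]; gcongr
  have hab1 : α + β = 1 := by rw [hα, hβ]; field_simp
  -- clip lands in [α, β]
  have hclip_mem : ∀ x, α ≤ clip L x ∧ clip L x ≤ β := by
    intro x
    constructor
    · exact le_max_left _ _
    · exact max_le hαβ (min_le_left _ _)
  -- clip is 1-Lipschitz
  have hclip_lip : ∀ x y, |clip L x - clip L y| ≤ |x - y| := by
    intro x y
    unfold clip
    rw [max_comm _ (min β x), max_comm _ (min β y)]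
    refine le_trans (abs_max_sub_max_le_abs _ _ _) ?_
    refine le_trans (abs_min_sub_min_le_max β x β y) ?_
    simp
  -- log is (1/α)-Lipschitz on [α, ∞); logit = log x - log (1 - x)
  have hmain : ∀ x y, α ≤ x → x ≤ β → α ≤ y → y ≤ β →
      |logit x - logit y| ≤ 2 / α * |x - y| := by
    intro x y hx1 hx2 hy1 hy2
    have hx0 : 0 < x := lt_of_lt_of_le hα0 hx1
    have hy0 : 0 < y := lt_of_lt_of_le hα0 hy1
    have h1x : α ≤ 1 - x := by linarith
    have h1y : α ≤ 1 - y := by linarith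
    have h1x0 : 0 < 1 - x := lt_of_lt_of_le hα0 h1x
    have h1y0 : 0 < 1 - y := lt_of_lt_of_le hα0 h1y
    have e1 : logit x = Real.log x - Real.log (1 - x) :=
      Real.log_div hx0.ne' h1x0.ne'
    have e2 : logit y = Real.log y - Real.log (1 - y) :=
      Real.log_div hy0.ne' h1y0.ne'
    have l1 := log_lip_s18 hα0 hx1 hy1
    have l2 := log_lip_s18 hα0 h1x h1y
    have e3 : |(1 - x) - (1 - y)| = |x - y| := by
      rw [show (1 - x) - (1 - y) = -(x - y) by ring, abs_neg]
    rw [e3] at l2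
    calc |logit x - logit y|
        = |(Real.log x - Real.log y) - (Real.log (1 - x) - Real.log (1 - y))| := by
          rw [e1, e2]; ring_nf
      _ ≤ |Real.log x - Real.log y| + |Real.log (1 - x) - Real.log (1 - y)| :=
          abs_sub _ _
      _ ≤ |x - y| / α + |x - y| / α := add_le_add l1 l2
      _ = 2 / α * |x - y| := by ring
  have h1 := hmain _ _ (hclip_mem u).1 (hclip_mem u).2 (hclip_mem v).1 (hclip_mem v).2
  have h2 := hclip_lip u v
  have h3 : 2 / α = 2 * (1 + Real.exp (2 * L)) := by
    rw [hα]; field_simp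
  calc |logit (clip L u) - logit (clip L v)| ≤ 2 / α * |clip L u - clip L v| := h1
    _ ≤ 2 / α * |u - v| := by
        apply mul_le_mul_of_nonneg_left h2; positivity
    _ = 2 * (1 + Real.exp (2 * L)) * |u - v| := by rw [h3]

lemma sigmoid_nonneg' (x : ℝ) : 0 ≤ RLHF.sigmoid x := by
  unfold RLHF.sigmoid; positivity

lemma sigmoid_le_one' (x : ℝ) : RLHF.sigmoid x ≤ 1 := by
  unfold RLHF.sigmoid
  rw [div_le_one (by positivity)]
  linarith [Real.exp_pos x]

lemma measurable_logit_clip (L : ℝ) : Measurable fun x : ℝ => logit (clip L x) := by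
  have h1 : Continuous fun x : ℝ => clip L x :=
    continuous_const.max (continuous_const.min continuous_id)
  have h2 : Measurable fun y : ℝ => logit y :=
    Real.measurable_log.comp (measurable_id.div (measurable_const.sub measurable_id))
  exact h2.comp h1.measurable

lemma triple_sum_subtype {S A : ℕ} (N : Fin S → Fin A → Fin A → ℝ)
    (F : Fin S → Fin A → Fin A → ℝ) (h0 : ∀ a b c, ¬0 < N a b c → F a b c = 0) :
    (∑ a, ∑ b, ∑ c, F a b c) =
      ∑ τ : {τ : Fin S × Fin A × Fin A // 0 < N τ.1 τ.2.1 τ.2.2},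
        F τ.1.1 τ.1.2.1 τ.1.2.2 := by
  classical
  have h1 : (∑ a, ∑ b, ∑ c, F a b c) =
      ∑ x : Fin S × Fin A × Fin A, F x.1 x.2.1 x.2.2 := by
    rw [Fintype.sum_prod_type]
    exact Finset.sum_congr rfl fun a _ => by rw [Fintype.sum_prod_type]
  rw [h1]
  rw [← Finset.sum_filter_of_ne
    (p := fun x : Fin S × Fin A × Fin A => 0 < N x.1 x.2.1 x.2.2)
    (fun x _ hne => by by_contra h; exact hne (h0 _ _ _ h))]
  exact Finset.sum_subtype _ (fun x => by simp [Finset.mem_filter])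
    (fun x : Fin S × Fin A × Fin A => F x.1 x.2.1 x.2.2)

lemma cost_symm {S A d : ℕ} (v : Inst S A d) (k : Fin S) (i j : Fin A)
    {u1 u2 : Fin S → Fin A → Fin A → ℝ}
    (h1 : v.IsLOW k i j u1) (h2 : v.IsLOW k j i u2) : v.cost u1 = v.cost u2 := by
  have negFeas : ∀ (a b : Fin A) (u : Fin S → Fin A → Fin A → ℝ),
      v.Feasible k a b u → v.Feasible k b a (fun x y z => -u x y z) := by
    rintro a b u ⟨hu0, hu⟩
    constructor
    · intro x y z h
      simp [hu0 x y z h]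
    · rw [show v.φ k b - v.φ k a = -(v.φ k a - v.φ k b) by rw [neg_sub], hu]
      simp [neg_smul, Finset.sum_neg_distrib]
  have costNeg : ∀ u : Fin S → Fin A → Fin A → ℝ,
      v.cost (fun x y z => -u x y z) = v.cost u := by
    intro u
    unfold Inst.cost
    refine Finset.sum_congr rfl fun a _ => Finset.sum_congr rfl fun b _ =>
      Finset.sum_congr rfl fun c _ => ?_
    simp [neg_sq]
  apply le_antisymm
  · have := h1.2 _ (negFeas _ _ _ h2.1)
    rwa [costNeg] at this
  · have := h2.2 _ (negFeas _ _ _ h1.1)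
    rwa [costNeg] at this

/-- **SubGaussianity of the RL-LOW relative-reward estimate.**
There is a constant `C > 0` depending only on `L` such that for every consistent
instance `v`, every `n` with `n·N_{k,i,j} ∈ ℕ`, and every `(k,i)` with `i ≠ i*_k`,
the estimate `r̂_{k,i*_k,i}` is subGaussian with variance proxy at most
`C·γ_{k,i}/n`. -/
theorem rl_low_estimate_subgaussian (L : ℝ) (hL : 0 < L) :
    ∃ C : ℝ, 0 < C ∧
      ∀ (S A d : ℕ), 2 ≤ A →
      ∀ v : Inst S A d, (∀ k i, |v.r k i| ≤ L) → v.Consistent →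
      ∀ istar : Fin S → Fin A, v.BestAction istar →
      ∀ w : Fin S → Fin A → Fin A → Fin S → Fin A → Fin A → ℝ,
        (∀ k i j, i ≠ j → v.IsLOW k i j (w k i j)) →
      ∀ n : ℕ, 1 ≤ n →
        (∀ k i j, ∃ m : ℕ, (m : ℝ) = n * v.N k i j) →
        ∀ (Ω : Type) [MeasurableSpace Ω] (P : MeasureTheory.Measure Ω),
          MeasureTheory.IsProbabilityMeasure P →
        ∀ Y : Fin S → Fin A → Fin A → Ω → ℕ, IsBTLSample v n P Y →
        ∀ k : Fin S, ∀ i : Fin A, i ≠ istar k →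
        ∀ t : ℝ,
          (∫ ω, Real.exp (t *
              (v.rhat L n w (fun k' i' j' => Y k' i' j' ω) k (istar k) i -
                ∫ ω', v.rhat L n w (fun k' i' j' => Y k' i' j' ω') k (istar k) i ∂P))
            ∂P) ≤
            Real.exp ((C * v.cost (w k i (istar k)) / n) * t ^ 2 / 2) := by
  classical
  refine ⟨2 * (2 * (1 + Real.exp (2 * L))) ^ 2, by positivity, ?_⟩
  set Lip : ℝ := 2 * (1 + Real.exp (2 * L)) with hLipdef
  have hLip0 : (0:ℝ) < Lip := by rw [hLipdef]; positivity
  intro S A d hA v hvL hvC istar histar w hw n hn hm Ω mΩ P hP Y hBTL k i hi t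
  haveI := hP
  obtain ⟨hYmeas, hYlaw, hYindep⟩ := hBTL
  have hik : istar k ≠ i := fun h => hi h.symm
  have hn0 : (0:ℝ) < n := by exact_mod_cast Nat.lt_of_lt_of_le Nat.zero_lt_one hn
  have hW0 : ∀ k' i' j', v.N k' i' j' = 0 → w k (istar k) i k' i' j' = 0 :=
    (hw k (istar k) i hik).1.1
  -- choose the integer trial counts
  have hmE : ∀ τ : {τ : Fin S × Fin A × Fin A // 0 < v.N τ.1 τ.2.1 τ.2.2},
      ∃ m : ℕ, (m : ℝ) = n * v.N τ.1.1 τ.1.2.1 τ.1.2.2 := fun τ => hm _ _ _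
  choose M hM using hmE
  have hMpos : ∀ τ, (0:ℝ) < M τ := fun τ => by
    rw [hM]; exact mul_pos hn0 τ.2
  set p : {τ : Fin S × Fin A × Fin A // 0 < v.N τ.1 τ.2.1 τ.2.2} → ℝ :=
    fun τ => RLHF.sigmoid (v.r τ.1.1 τ.1.2.1 - v.r τ.1.1 τ.1.2.2) with hpdef
  set Wt : {τ : Fin S × Fin A × Fin A // 0 < v.N τ.1 τ.2.1 τ.2.2} → ℝ :=
    fun τ => w k (istar k) i τ.1.1 τ.1.2.1 τ.1.2.2 with hWtdef
  set φf : {τ : Fin S × Fin A × Fin A // 0 < v.N τ.1 τ.2.1 τ.2.2} → ℝ → ℝ :=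
    fun τ x => Wt τ * logit (clip L (x / (n * v.N τ.1.1 τ.1.2.1 τ.1.2.2))) with hφfdef
  set μf : {τ : Fin S × Fin A × Fin A // 0 < v.N τ.1 τ.2.1 τ.2.2} → ℝ :=
    fun τ => ∑ y ∈ Finset.range (M τ + 1), bpmf (p τ) (M τ) y * φf τ (y : ℝ) with hμfdef
  -- binomial law with M τ trials
  have hlaw : ∀ τ : {τ : Fin S × Fin A × Fin A // 0 < v.N τ.1 τ.2.1 τ.2.2},
      HasBinomialLaw P (Y τ.1.1 τ.1.2.1 τ.1.2.2) (M τ) (p τ) := by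
    intro τ
    have h := hYlaw τ.1.1 τ.1.2.1 τ.1.2.2 τ.2
    have hceil : ⌈(n : ℝ) * v.N τ.1.1 τ.1.2.1 τ.1.2.2⌉₊ = M τ := by
      rw [← hM τ]; exact Nat.ceil_natCast _
    rwa [hceil] at h
  -- integral formula
  have hIB : ∀ τ : {τ : Fin S × Fin A × Fin A // 0 < v.N τ.1 τ.2.1 τ.2.2}, ∀ f : ℕ → ℝ,
      Integrable (fun ω => f (Y τ.1.1 τ.1.2.1 τ.1.2.2 ω)) P ∧
        ∫ ω, f (Y τ.1.1 τ.1.2.1 τ.1.2.2 ω) ∂P =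
          ∑ y ∈ Finset.range (M τ + 1), bpmf (p τ) (M τ) y * f y :=
    fun τ f => integral_binomial P _ (hYmeas _ _ _) (M τ) (p τ)
      (sigmoid_nonneg' _) (sigmoid_le_one' _) (hlaw τ) f
  -- centered summands
  set X : {τ : Fin S × Fin A × Fin A // 0 < v.N τ.1 τ.2.1 τ.2.2} → Ω → ℝ :=
    fun τ ω => φf τ ((Y τ.1.1 τ.1.2.1 τ.1.2.2 ω : ℝ)) - μf τ with hXdef
  have hφmeas : ∀ τ, Measurable (fun x : ℝ => φf τ x - μf τ) := by
    intro τ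
    apply Measurable.sub _ measurable_const
    exact measurable_const.mul ((measurable_logit_clip L).comp (measurable_id.div_const _))
  have hYR : ∀ τ : {τ : Fin S × Fin A × Fin A // 0 < v.N τ.1 τ.2.1 τ.2.2},
      Measurable (fun ω => (Y τ.1.1 τ.1.2.1 τ.1.2.2 ω : ℝ)) :=
    fun τ => measurable_from_top.comp (hYmeas _ _ _)
  have hXmeas : ∀ τ, Measurable (X τ) := fun τ => (hφmeas τ).comp (hYR τ)
  have hXindep : iIndepFun X P :=
    hYindep.comp (fun τ => fun x : ℝ => φf τ x - μf τ) hφmeas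
  -- bounded differences
  have hdiff : ∀ τ, ∀ y : ℕ,
      |φf τ ((y + 1 : ℕ) : ℝ) - φf τ (y : ℝ)| ≤ |Wt τ| * Lip / M τ := by
    intro τ y
    have hMp := hMpos τ
    have hNn : (n : ℝ) * v.N τ.1.1 τ.1.2.1 τ.1.2.2 = (M τ : ℝ) := (hM τ).symm
    simp only [hφfdef]
    rw [← mul_sub, abs_mul]
    have hlip := logit_clip_lipschitz hL
      (((y + 1 : ℕ) : ℝ) / ((n : ℝ) * v.N τ.1.1 τ.1.2.1 τ.1.2.2))
      (((y : ℕ) : ℝ) / ((n : ℝ) * v.N τ.1.1 τ.1.2.1 τ.1.2.2))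
    have habs : |((y + 1 : ℕ) : ℝ) / ((n : ℝ) * v.N τ.1.1 τ.1.2.1 τ.1.2.2) -
        ((y : ℕ) : ℝ) / ((n : ℝ) * v.N τ.1.1 τ.1.2.1 τ.1.2.2)| = 1 / (M τ : ℝ) := by
      rw [div_sub_div_same, hNn]
      push_cast
      rw [show ((y : ℝ) + 1) - (y : ℝ) = 1 by ring]
      rw [abs_div, abs_one, abs_of_pos hMp]
    rw [habs] at hlip
    calc |Wt τ| * |logit (clip L (((y + 1 : ℕ) : ℝ) / ((n:ℝ) * v.N τ.1.1 τ.1.2.1 τ.1.2.2))) -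
          logit (clip L (((y : ℕ) : ℝ) / ((n:ℝ) * v.N τ.1.1 τ.1.2.1 τ.1.2.2)))|
        ≤ |Wt τ| * (Lip * (1 / (M τ : ℝ))) := by
          apply mul_le_mul_of_nonneg_left _ (abs_nonneg _)
          simpa [hLipdef] using hlip
      _ = |Wt τ| * Lip / M τ := by ring
  -- per-term mgf bound
  have hterm : ∀ τ, mgf (X τ) P t ≤
      Real.exp (t ^ 2 * (Wt τ ^ 2 * Lip ^ 2 / ((n : ℝ) * v.N τ.1.1 τ.1.2.1 τ.1.2.2))) := by
    intro τ
    have hMp := hMpos τ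
    have hmgfeq : mgf (X τ) P t = ∫ ω, Real.exp (t * X τ ω) ∂P := rfl
    have hIBf := (hIB τ (fun y : ℕ => Real.exp (t * (φf τ (y : ℝ) - μf τ)))).2
    rw [hmgfeq]
    simp only [hXdef]
    rw [hIBf]
    have key := bpmf_hoeffding (p τ) (|Wt τ| * Lip / M τ) t
      (sigmoid_nonneg' _) (sigmoid_le_one' _) (M τ) (fun y : ℕ => φf τ (y : ℝ)) (hdiff τ)
    calc ∑ y ∈ Finset.range (M τ + 1), bpmf (p τ) (M τ) y *
          Real.exp (t * (φf τ (y : ℝ) - μf τ))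
        = Real.exp (-(t * μf τ)) *
            ∑ y ∈ Finset.range (M τ + 1), bpmf (p τ) (M τ) y * Real.exp (t * φf τ (y : ℝ)) := by
          rw [Finset.mul_sum]
          refine Finset.sum_congr rfl fun y _ => ?_
          rw [show t * (φf τ (y : ℝ) - μf τ) = t * φf τ (y : ℝ) + -(t * μf τ) by ring,
            Real.exp_add]
          ring
      _ ≤ Real.exp (-(t * μf τ)) *
            Real.exp (t * (∑ y ∈ Finset.range (M τ + 1), bpmf (p τ) (M τ) y * φf τ (y : ℝ)) +
              (M τ) * (t ^ 2 * (|Wt τ| * Lip / M τ) ^ 2)) :=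
          mul_le_mul_of_nonneg_left key (Real.exp_pos _).le
      _ = Real.exp ((M τ) * (t ^ 2 * (|Wt τ| * Lip / M τ) ^ 2)) := by
          rw [← Real.exp_add]
          congr 1
          rw [hμfdef]
          ring
      _ = Real.exp (t ^ 2 * (Wt τ ^ 2 * Lip ^ 2 / ((n : ℝ) * v.N τ.1.1 τ.1.2.1 τ.1.2.2))) := by
          congr 1
          rw [← hM τ]
          rw [div_pow, mul_pow, sq_abs]
          field_simp
  -- rewrite the estimator as a sum over the support
  have hR : ∀ ω : Ω, v.rhat L n w (fun k' i' j' => Y k' i' j' ω) k (istar k) i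
      = ∑ τ : {τ : Fin S × Fin A × Fin A // 0 < v.N τ.1 τ.2.1 τ.2.2},
          φf τ ((Y τ.1.1 τ.1.2.1 τ.1.2.2 ω : ℝ)) := by
    intro ω
    rw [Inst.rhat, if_neg hik]
    rw [triple_sum_subtype v.N
      (fun a b c => w k (istar k) i a b c *
        logit (clip L (v.B n (fun k' i' j' => Y k' i' j' ω) a b c)))
      (fun a b c hnc => by
        have hz : v.N a b c = 0 := le_antisymm (not_lt.mp hnc) (v.N_nonneg a b c)
        simp [hW0 a b c hz])]
    refine Finset.sum_congr rfl fun τ _ => ?_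
    simp only [hφfdef, hWtdef, Inst.B, if_pos τ.2]
  -- integrability and expectation of each summand
  have hint : ∀ τ, Integrable (fun ω => φf τ ((Y τ.1.1 τ.1.2.1 τ.1.2.2 ω : ℝ))) P :=
    fun τ => (hIB τ (fun y : ℕ => φf τ (y : ℝ))).1
  have hERτ : ∀ τ, ∫ ω, φf τ ((Y τ.1.1 τ.1.2.1 τ.1.2.2 ω : ℝ)) ∂P = μf τ :=
    fun τ => (hIB τ (fun y : ℕ => φf τ (y : ℝ))).2
  have hER : ∫ ω', v.rhat L n w (fun k' i' j' => Y k' i' j' ω') k (istar k) i ∂P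
      = ∑ τ : {τ : Fin S × Fin A × Fin A // 0 < v.N τ.1 τ.2.1 τ.2.2}, μf τ := by
    simp only [hR]
    rw [MeasureTheory.integral_finset_sum _ (fun τ _ => hint τ)]
    exact Finset.sum_congr rfl fun τ _ => hERτ τ
  -- cost equals sum over the support
  have hcost : v.cost (w k (istar k) i)
      = ∑ τ : {τ : Fin S × Fin A × Fin A // 0 < v.N τ.1 τ.2.1 τ.2.2},
          Wt τ ^ 2 / v.N τ.1.1 τ.1.2.1 τ.1.2.2 := by
    rw [Inst.cost]
    rw [triple_sum_subtype v.N
      (fun a b c => if 0 < v.N a b c then w k (istar k) i a b c ^ 2 / v.N a b c else 0)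
      (fun a b c h => if_neg h)]
    exact Finset.sum_congr rfl fun τ _ => if_pos τ.2
  have hcost' : v.cost (w k i (istar k)) = v.cost (w k (istar k) i) :=
    cost_symm v k i (istar k) (hw k i (istar k) hi) (hw k (istar k) i hik)
  -- put everything together
  have hfun : (fun ω => Real.exp (t *
      (v.rhat L n w (fun k' i' j' => Y k' i' j' ω) k (istar k) i -
        ∫ ω', v.rhat L n w (fun k' i' j' => Y k' i' j' ω') k (istar k) i ∂P)))
      = fun ω => Real.exp (t * ∑ τ, X τ ω) := by
    funext ω
    rw [hR ω, hER, ← Finset.sum_sub_distrib]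
  rw [hfun]
  have hmgf_eq : mgf (∑ τ, X τ) P t = ∫ ω, Real.exp (t * ∑ τ, X τ ω) ∂P := by
    simp only [mgf, Finset.sum_apply]
  rw [← hmgf_eq, hXindep.mgf_sum hXmeas Finset.univ]
  calc ∏ τ, mgf (X τ) P t
      ≤ ∏ τ, Real.exp (t ^ 2 * (Wt τ ^ 2 * Lip ^ 2 / ((n : ℝ) * v.N τ.1.1 τ.1.2.1 τ.1.2.2))) :=
        Finset.prod_le_prod (fun τ _ => mgf_nonneg) (fun τ _ => hterm τ)
    _ = Real.exp (∑ τ, t ^ 2 * (Wt τ ^ 2 * Lip ^ 2 / ((n : ℝ) * v.N τ.1.1 τ.1.2.1 τ.1.2.2))) :=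
        Real.exp_sum _ _ |>.symm
    _ = Real.exp ((2 * Lip ^ 2 * v.cost (w k i (istar k)) / n) * t ^ 2 / 2) := by
        congr 1
        rw [hcost', hcost]
        rw [Finset.mul_sum, Finset.sum_div, Finset.sum_mul, Finset.sum_div]
        refine Finset.sum_congr rfl fun τ _ => ?_
        have hNpos : (0:ℝ) < v.N τ.1.1 τ.1.2.1 τ.1.2.2 := τ.2
        field_simp
end
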